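/- arXiv:1605.05713 — 8 statements merged into one kernel-verified Lean document; each statement's English description precedes it below -/
import Mathlib

section
/- Let m ≥ 1 and let W = (w₀, w₁, …, w_{2^m−1}) be a tuple with wᵢ ∈ {1, −1} for all i. Then W = H_{2^m}^{(r)} or W = −H_{2^m}^{(r)} for some r ∈ {0, …, 2^m−1} if and only if for any four pairwise distinct integers j, c, l, v ∈ {0, …, 2^m−1} with z_j ⊕ z_c ⊕ z_l ⊕ z_v = 0 one has w_j·w_c = w_l·w_v. -/
open Finset

/-- Boolean functions on `𝔽₂ⁿ`. -/
abbrev BF (n : ℕ) := (Fin n → ZMod 2) → ZMod 2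

/-- Dot product on `𝔽₂ⁿ`. -/
def bdot {n : ℕ} (u x : Fin n → ZMod 2) : ZMod 2 := ∑ i, u i * x i

/-- Walsh–Hadamard transform of a Boolean function. -/
def walsh {n : ℕ} (g : BF n) (u : Fin n → ZMod 2) : ℤ :=
  ∑ x : Fin n → ZMod 2, (-1 : ℤ) ^ (g x + bdot u x).val

/-- Generalized Walsh–Hadamard transform of `f : 𝔽₂ⁿ → ℤ_q`. -/
noncomputable def gwht {n q : ℕ} (f : (Fin n → ZMod 2) → ZMod q) (u : Fin n → ZMod 2) : ℂ :=
  ∑ x : Fin n → ZMod 2,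
    Complex.exp (2 * Real.pi * Complex.I / (q : ℂ)) ^ (f x).val * (-1 : ℂ) ^ (bdot u x).val

/-- `f : 𝔽₂ⁿ → ℤ_q` is gbent if `|H_f(u)| = 2^{n/2}` for all `u`. -/
def IsGbent {n q : ℕ} (f : (Fin n → ZMod 2) → ZMod q) : Prop :=
  ∀ u, ‖gwht f u‖ = (2 : ℝ) ^ ((n : ℝ) / 2)

/-- A Boolean function (in an even number `n` of variables) is bent
if `|W_g(u)| = 2^{n/2}` for all `u`. -/
def IsBent {n : ℕ} (g : BF n) : Prop := ∀ u, |walsh g u| = 2 ^ (n / 2)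

/-- A Boolean function (in an odd number `n` of variables) is semi-bent if
`W_g(u) ∈ {0, ±2^{(n+1)/2}}` for all `u`. -/
def IsSemiBent {n : ℕ} (g : BF n) : Prop :=
  ∀ u, walsh g u = 0 ∨ walsh g u = 2 ^ ((n + 1) / 2) ∨ walsh g u = -2 ^ ((n + 1) / 2)

/-- `gd` is the dual of the bent function `g`: `W_g(u) = 2^{n/2}(-1)^{gd(u)}`. -/
def IsDual {n : ℕ} (g gd : BF n) : Prop :=
  ∀ u, walsh g u = 2 ^ (n / 2) * (-1 : ℤ) ^ (gd u).val

/-- The `t`-th binary digit of `j`, as an element of `𝔽₂`. -/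
def bit (t j : ℕ) : ZMod 2 := if Nat.testBit j t then 1 else 0

/-- Dot product `z_r · z_j` of the binary representations (of length `m`) of `r` and `j`. -/
def zdot (m r j : ℕ) : ZMod 2 := ∑ t ∈ Finset.range m, bit t r * bit t j

/-- Entry `(r, j)` of the Sylvester–Hadamard matrix `H_{2^m}`, i.e. `(-1)^{z_r · z_j}`. -/
def hadRow (m r j : ℕ) : ℤ := (-1 : ℤ) ^ (zdot m r j).val

/-- `a 0, …, a (k-1)` are the Boolean coordinate functions of `f : 𝔽₂ⁿ → ℤ_{2^k}`:
`f = a₀ + 2a₁ + ⋯ + 2^{k-1}a_{k-1}`. -/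
def coordExpand {n : ℕ} (k : ℕ) (a : ℕ → BF n) (f : (Fin n → ZMod 2) → ZMod (2 ^ k)) : Prop :=
  ∀ x, f x = ∑ j ∈ Finset.range k, (2 : ZMod (2 ^ k)) ^ j * ((a j x).val : ZMod (2 ^ k))

/-- The `i`-th component function `g_i = a_{k-1} ⊕ i₀a₀ ⊕ ⋯ ⊕ i_{k-2}a_{k-2}`. -/
def component {n : ℕ} (k : ℕ) (a : ℕ → BF n) (i : ℕ) : BF n :=
  fun x => a (k - 1) x + ∑ t ∈ Finset.range (k - 1), bit t i * a t x

/-- The affine space `a0 ⊕ ⟨a 0, …, a (m-1)⟩` of Boolean functions. -/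
def affSpan {n : ℕ} (m : ℕ) (a0 : BF n) (a : ℕ → BF n) : Set (BF n) :=
  {g | ∃ c : ℕ → ZMod 2, g = fun x => a0 x + ∑ t ∈ Finset.range m, c t * a t x}

/-- Walsh–Hadamard transform for Boolean functions on `𝔽₂ⁿ × 𝔽₂^m`. -/
def walshP {n m : ℕ} (F : (Fin n → ZMod 2) → (Fin m → ZMod 2) → ZMod 2)
    (u : Fin n → ZMod 2) (v : Fin m → ZMod 2) : ℤ :=
  ∑ x : Fin n → ZMod 2, ∑ y : Fin m → ZMod 2, (-1 : ℤ) ^ (F x y + bdot u x + bdot v y).val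
lemma neg_one_pow_val_add (x y : ZMod 2) :
    ((-1 : ℤ)) ^ ((x + y).val) = (-1) ^ x.val * (-1) ^ y.val := by
  revert x y; decide

lemma bit_xor (t j c : ℕ) : bit t (j ^^^ c) = bit t j + bit t c := by
  unfold bit
  rw [Nat.testBit_xor]
  cases hj : j.testBit t <;> cases hc : c.testBit t <;> simp <;> decide

lemma zdot_xor (m r j c : ℕ) : zdot m r (j ^^^ c) = zdot m r j + zdot m r c := by
  unfold zdot
  rw [← Finset.sum_add_distrib]
  refine Finset.sum_congr rfl fun t _ => ?_
  rw [bit_xor, mul_add]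

lemma hadRow_mul (m r j c : ℕ) :
    hadRow m r j * hadRow m r c = hadRow m r (j ^^^ c) := by
  unfold hadRow
  rw [zdot_xor, neg_one_pow_val_add]

lemma zdot_zero_right (m r : ℕ) : zdot m r 0 = 0 := by
  unfold zdot bit; simp

lemma zdot_two_pow (m r t : ℕ) (ht : t < m) : zdot m r (2 ^ t) = bit t r := by
  unfold zdot
  rw [Finset.sum_eq_single t]
  · unfold bit; simp [Nat.testBit_two_pow_self]
  · intro s _ hst
    unfold bit
    simp [Nat.testBit_two_pow_of_ne (Ne.symm hst)]
  · intro h; exact absurd (Finset.mem_range.mpr ht) h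

lemma sum_pow_lt (m : ℕ) (b : ℕ → Bool) :
    (∑ s ∈ Finset.range m, if b s then 2 ^ s else 0) < 2 ^ m := by
  induction m with
  | zero => simp
  | succ m ih =>
    rw [Finset.sum_range_succ, pow_succ]
    have h : (if b m then 2 ^ m else 0) ≤ 2 ^ m := by split <;> omega
    omega

lemma testBit_sum (b : ℕ → Bool) (m t : ℕ) :
    (∑ s ∈ Finset.range m, if b s then 2 ^ s else 0).testBit t
      = (b t && decide (t < m)) := by
  induction m with
  | zero => simp
  | succ m ih =>
    rw [Finset.sum_range_succ]
    by_cases hb : b m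
    · rw [if_pos hb, Nat.add_comm]
      rcases lt_trichotomy t m with h | h | h
      · rw [Nat.testBit_two_pow_add_gt h, ih]
        simp [h, Nat.lt_succ_of_lt h]
      · subst h
        rw [Nat.testBit_two_pow_add_eq, ih]
        simp [hb]
      · have hlt : 2 ^ m + (∑ s ∈ Finset.range m, if b s then 2 ^ s else 0) < 2 ^ t := by
          have h1 := sum_pow_lt m b
          have h2 : 2 ^ (m + 1) ≤ 2 ^ t := Nat.pow_le_pow_right (by norm_num) h
          have h3 : 2 ^ (m + 1) = 2 ^ m * 2 := pow_succ 2 m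
          omega
        rw [Nat.testBit_lt_two_pow hlt]
        simp [Nat.le_of_lt h, Nat.lt_irrefl]
        omega
    · rw [if_neg hb, Nat.add_zero, ih]
      rcases lt_trichotomy t m with h | h | h
      · simp [h, Nat.lt_succ_of_lt h]
      · subst h; simp [hb]
      · simp [Nat.le_of_lt h, Nat.not_lt.mpr (Nat.le_of_lt h)]
        omega

lemma xor_lt_two_pow' {a b m : ℕ} (ha : a < 2 ^ m) (hb : b < 2 ^ m) : a ^^^ b < 2 ^ m := by
  apply Nat.lt_pow_two_of_testBit
  intro i hi
  have h2 : 2 ^ m ≤ 2 ^ i := Nat.pow_le_pow_right (by norm_num) hi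
  rw [Nat.testBit_xor, Nat.testBit_lt_two_pow (lt_of_lt_of_le ha h2),
    Nat.testBit_lt_two_pow (lt_of_lt_of_le hb h2)]
  rfl

lemma two_pow_xor_eq_add {t b : ℕ} (hb : b < 2 ^ t) : 2 ^ t ^^^ b = 2 ^ t + b := by
  apply Nat.eq_of_testBit_eq
  intro s
  rw [Nat.testBit_xor]
  rcases lt_trichotomy s t with h | h | h
  · rw [Nat.testBit_two_pow_of_ne (Nat.ne_of_gt h), Nat.testBit_two_pow_add_gt h]
    simp
  · subst h
    rw [Nat.testBit_two_pow_self, Nat.testBit_two_pow_add_eq,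
      Nat.testBit_lt_two_pow hb]
    simp
  · have h2 : 2 ^ (t + 1) ≤ 2 ^ s := Nat.pow_le_pow_right (by norm_num) h
    have h3 : 2 ^ (t + 1) = 2 ^ t * 2 := pow_succ 2 t
    rw [Nat.testBit_two_pow_of_ne (Nat.ne_of_lt h),
      Nat.testBit_lt_two_pow (by omega : b < 2 ^ s),
      Nat.testBit_lt_two_pow (by omega : 2 ^ t + b < 2 ^ s)]
    rfl

/-- Lemma 1(iii): a `±1`-tuple of length `2^m` is (±) a row of the Sylvester–Hadamard matrix
iff for all pairwise distinct `j, c, l, v` with `z_j ⊕ z_c ⊕ z_l ⊕ z_v = 0` one has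
`w_j w_c = w_l w_v`. -/
theorem hadamard_row_iff_quadruple_condition (m : ℕ) (hm : 1 ≤ m) (w : ℕ → ℤ)
    (hw : ∀ i < 2 ^ m, w i = 1 ∨ w i = -1) :
    (∃ r < 2 ^ m, (∀ i < 2 ^ m, w i = hadRow m r i) ∨ (∀ i < 2 ^ m, w i = -hadRow m r i)) ↔
      (∀ j < 2 ^ m, ∀ c < 2 ^ m, ∀ l < 2 ^ m, ∀ v < 2 ^ m,
        j ≠ c → j ≠ l → j ≠ v → c ≠ l → c ≠ v → l ≠ v →
        j ^^^ c ^^^ l ^^^ v = 0 → w j * w c = w l * w v) := by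
  have h2m : 0 < 2 ^ m := Nat.pow_pos (by norm_num)
  constructor
  · rintro ⟨r, hr, hcase⟩ j hj c hc l hl v hv hjc hjl hjv hcl hcv hlv hxor
    have hjclv : j ^^^ c = l ^^^ v := by
      have h2 : (j ^^^ c) ^^^ (l ^^^ v) = 0 := by
        rw [← Nat.xor_assoc]; exact hxor
      exact xor_eq_zero_iff.mp h2
    rcases hcase with h | h
    · rw [h j hj, h c hc, h l hl, h v hv, hadRow_mul, hadRow_mul, hjclv]
    · rw [h j hj, h c hc, h l hl, h v hv, neg_mul_neg, neg_mul_neg,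
        hadRow_mul, hadRow_mul, hjclv]
  · intro H
    have sq : ∀ i < 2 ^ m, w i * w i = 1 := by
      intro i hi; rcases hw i hi with h | h <;> rw [h] <;> norm_num
    have hw00 : w 0 * w 0 = 1 := sq 0 h2m
    have key : ∀ a b, a < 2 ^ m → b < 2 ^ m → w a * w b = w (a ^^^ b) * w 0 := by
      intro a b ha hb
      by_cases hab : a = b
      · subst hab; rw [Nat.xor_self, sq a ha, hw00]
      by_cases ha0 : a = 0
      · subst ha0; rw [Nat.zero_xor]; ring
      by_cases hb0 : b = 0
      · subst hb0; rw [Nat.xor_zero]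
      · have hx : a ^^^ b < 2 ^ m := xor_lt_two_pow' ha hb
        refine H a ha b hb (a ^^^ b) hx 0 h2m hab ?_ ha0 ?_ hb0 (mt xor_eq_zero_iff.mp hab) ?_
        · intro h
          apply hb0
          have := congrArg (fun x => a ^^^ x) h
          simpa [xor_cancel_left] using this.symm
        · intro h
          apply ha0
          have := congrArg (fun x => x ^^^ b) h
          simpa [xor_cancel_right] using this.symm
        · rw [Nat.xor_assoc, Nat.xor_zero, Nat.xor_self]
    set b : ℕ → Bool := fun t => decide (w 0 * w (2 ^ t) = -1) with hbdef
    set r : ℕ := ∑ s ∈ Finset.range m, if b s then 2 ^ s else 0 with hrdef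
    have hrlt : r < 2 ^ m := sum_pow_lt m b
    have g2t : ∀ t < m, w 0 * w (2 ^ t) = (-1 : ℤ) ^ (bit t r).val := by
      intro t ht
      have hpt : 2 ^ t < 2 ^ m := Nat.pow_lt_pow_right (by norm_num) ht
      have hbit : bit t r = if b t then 1 else 0 := by
        unfold bit
        rw [hrdef, testBit_sum]
        simp [ht]
      by_cases hc : w 0 * w (2 ^ t) = -1
      · have : b t = true := by rw [hbdef]; simpa using hc
        rw [hc, hbit, this]
        decide
      · have hone : w 0 * w (2 ^ t) = 1 := by
          rcases hw 0 h2m with h0 | h0 <;> rcases hw (2 ^ t) hpt with h1 | h1 <;>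
            rw [h0, h1] at hc ⊢ <;> omega
        have : b t = false := by rw [hbdef]; simp [hc]
        rw [hone, hbit, this]
        decide
    have main : ∀ j, j < 2 ^ m → w 0 * w j = hadRow m r j := by
      intro j
      induction j using Nat.strong_induction_on with
      | _ j ih =>
        intro hj
        rcases Nat.eq_zero_or_pos j with rfl | hpos
        · unfold hadRow
          rw [zdot_zero_right]
          simpa using hw00
        · set t := Nat.log2 j with htdef
          have hj0 : j ≠ 0 := Nat.pos_iff_ne_zero.mp hpos
          have h1 : 2 ^ t ≤ j := Nat.log2_self_le hj0
          have h2 : j < 2 ^ (t + 1) := Nat.lt_log2_self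
          have ht : t < m := (Nat.log2_lt hj0).mpr hj
          have hpt : 2 ^ t < 2 ^ m := Nat.pow_lt_pow_right (by norm_num) ht
          set c : ℕ := j - 2 ^ t with hcdef
          have hclt : c < 2 ^ t := by
            have : 2 ^ (t + 1) = 2 ^ t * 2 := pow_succ 2 t
            omega
          have hjeq : j = 2 ^ t ^^^ c := by
            rw [two_pow_xor_eq_add hclt]; omega
          have hc2 : c < 2 ^ m := lt_trans hclt hpt
          have hcj : c < j := by
            have : 0 < 2 ^ t := Nat.pow_pos (by norm_num)
            omega
          have ihc := ih c hcj hc2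
          have hkey := key (2 ^ t) c hpt hc2
          have gj : w 0 * w j = (w 0 * w (2 ^ t)) * (w 0 * w c) := by
            rw [hjeq]
            calc w 0 * w (2 ^ t ^^^ c) = (w (2 ^ t ^^^ c) * w 0) * 1 := by ring
              _ = (w (2 ^ t) * w c) * (w 0 * w 0) := by rw [← hkey, ← hw00]
              _ = (w 0 * w (2 ^ t)) * (w 0 * w c) := by ring
          rw [gj, ihc, g2t t ht]
          unfold hadRow
          rw [hjeq, zdot_xor, zdot_two_pow m r t ht, neg_one_pow_val_add]
    refine ⟨r, hrlt, ?_⟩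
    rcases hw 0 h2m with h0 | h0
    · left
      intro i hi
      have := main i hi
      rwa [h0, one_mul] at this
    · right
      intro i hi
      have := main i hi
      rw [h0] at this
      linarith
end

section
/- Let k ≥ 2 and f : 𝔽₂ⁿ → ℤ_{2^k}, with coordinate functions a₀,…,a_{k−1} and component functions g₀,…,g_{2^{k−1}−1}. For every u ∈ 𝔽₂ⁿ, 2^{k−1} · H_f(u) = ∑_{t=0}^{2^{k−1}−1} S_t ζ^t, where S_t = ∑_{j=0}^{2^{k−1}−1} (−1)^{z_t·z_j} W_{g_j}(u) and ζ = exp(2πi/2^k). -/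
open Finset

-- χ multiplicativity
lemma chi_add (a b : ZMod 2) : (-1 : ℂ) ^ ((a + b).val) = (-1) ^ a.val * (-1) ^ b.val := by
  rw [ZMod.val_add, ← neg_one_pow_eq_pow_mod_two, pow_add]

lemma chi_sum {ι : Type*} (s : Finset ι) (f : ι → ZMod 2) :
    (-1 : ℂ) ^ ((∑ i ∈ s, f i).val) = ∏ i ∈ s, (-1 : ℂ) ^ ((f i).val) := by
  induction s using Finset.cons_induction with
  | empty => simp
  | cons i s hi ih => rw [Finset.sum_cons, chi_add, ih, Finset.prod_cons]

-- bit lemmas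
lemma bit_eq_zero_of_lt {m j : ℕ} (h : j < 2 ^ m) : bit m j = 0 := by
  simp [bit, Nat.testBit_lt_two_pow h]

lemma bit_high {m j : ℕ} (h : j < 2 ^ m) : bit m (2 ^ m + j) = 1 := by
  simp [bit, Nat.testBit_eq_decide_div_mod_eq, Nat.div_eq_of_lt h]

lemma bit_low {m s j : ℕ} (hs : s < m) : bit s (2 ^ m + j) = bit s j := by
  have h1 : (2 ^ m + j) / 2 ^ s = 2 ^ (m - s) + j / 2 ^ s := by
    have h : 2 ^ m = 2 ^ s * 2 ^ (m - s) := by rw [← pow_add, Nat.add_sub_cancel' hs.le]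
    rw [h, Nat.mul_add_div (Nat.pow_pos (by norm_num))]
  have h2 : (2 ^ (m - s) + j / 2 ^ s) % 2 = j / 2 ^ s % 2 := by
    have : 2 ^ (m - s) = 2 * 2 ^ (m - s - 1) := by
      rw [← pow_succ']
      congr 1
      omega
    rw [this, Nat.mul_add_mod]
  simp [bit, Nat.testBit_eq_decide_div_mod_eq, h1, h2]

lemma zmod2_key : ∀ b : ZMod 2, b ≠ 0 → b = 1 := by decide
lemma zmod2_add_eq_zero : ∀ a b : ZMod 2, a + b = 0 ↔ a = b := by decide


open scoped Classical in
noncomputable def ind (P : Prop) : ℂ := if P then 1 else 0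

lemma ind_of {P : Prop} (h : P) : ind P = 1 := by simp [ind, h]
lemma ind_of_not {P : Prop} (h : ¬ P) : ind P = 0 := by simp [ind, h]
lemma ind_congr {P Q : Prop} (h : P ↔ Q) : ind P = ind Q := by
  rcases Classical.em P with hp | hp
  · rw [ind_of hp, ind_of (h.mp hp)]
  · rw [ind_of_not hp, ind_of_not (fun q => hp (h.mpr q))]

lemma orth (m : ℕ) (c : ℕ → ZMod 2) :
    ∑ j ∈ range (2 ^ m), (-1 : ℂ) ^ ((∑ s ∈ range m, bit s j * c s).val)
      = ind (∀ s ∈ range m, c s = 0) * 2 ^ m := by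
  induction m with
  | zero => simp [ind]
  | succ m ih =>
    rw [show (2:ℕ) ^ (m+1) = 2 ^ m + 2 ^ m by ring, Finset.sum_range_add]
    have h1 : ∀ j ∈ range (2 ^ m),
        (-1 : ℂ) ^ ((∑ s ∈ range (m + 1), bit s j * c s).val)
          = (-1 : ℂ) ^ ((∑ s ∈ range m, bit s j * c s).val) := by
      intro j hj
      rw [Finset.sum_range_succ, bit_eq_zero_of_lt (mem_range.mp hj), zero_mul, add_zero]
    have h2 : ∀ j ∈ range (2 ^ m),
        (-1 : ℂ) ^ ((∑ s ∈ range (m + 1), bit s (2 ^ m + j) * c s).val)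
          = (-1 : ℂ) ^ ((∑ s ∈ range m, bit s j * c s).val) * (-1) ^ (c m).val := by
      intro j hj
      rw [Finset.sum_range_succ, bit_high (mem_range.mp hj), one_mul,
        Finset.sum_congr rfl (fun s hs => by rw [bit_low (mem_range.mp hs)]), chi_add]
    rw [Finset.sum_congr rfl h1, Finset.sum_congr rfl h2, ← Finset.sum_mul, ih]
    by_cases h : c m = 0
    · have hiff : (∀ s ∈ range (m+1), c s = 0) ↔ (∀ s ∈ range m, c s = 0) := by
        constructor
        · intro H s hs
          exact H s (mem_range.mpr ((mem_range.mp hs).trans (Nat.lt_succ_self m)))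
        · intro H s hs
          rcases Nat.lt_succ_iff_lt_or_eq.mp (mem_range.mp hs) with h' | h'
          · exact H s (mem_range.mpr h')
          · rw [h']; exact h
      rw [ind_congr hiff, h]
      simp only [ZMod.val_zero, pow_zero, mul_one]
      ring
    · have hfalse : ¬ (∀ s ∈ range (m+1), c s = 0) :=
        fun H => h (H m (self_mem_range_succ m))
      rw [ind_of_not hfalse, zmod2_key _ h]
      by_cases h0 : (∀ s ∈ range m, c s = 0) <;>
        simp [ind_of, ind_of_not, h0, ZMod.val_one]

lemma sum_bits_select (m : ℕ) (ε : ℕ → ZMod 2) (G : ℕ → ℂ) :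
    ∑ t ∈ range (2 ^ m), ind (∀ s ∈ range m, bit s t = ε s) * G t
      = G (∑ s ∈ range m, (ε s).val * 2 ^ s) := by
  induction m generalizing G with
  | zero => simp [ind]
  | succ m ih =>
    rw [show (2:ℕ) ^ (m+1) = 2 ^ m + 2 ^ m by ring, Finset.sum_range_add,
      Finset.sum_range_succ]
    by_cases h : ε m = 0
    · have hu : ∀ t ∈ range (2^m),
          ind (∀ s ∈ range (m+1), bit s (2^m + t) = ε s) * G (2^m + t) = 0 := by
        intro t ht
        rw [ind_of_not, zero_mul]
        intro H
        have := H m (self_mem_range_succ m)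
        rw [bit_high (mem_range.mp ht), h] at this
        exact one_ne_zero this
      have hl : ∀ t ∈ range (2^m),
          ind (∀ s ∈ range (m+1), bit s t = ε s) * G t
            = ind (∀ s ∈ range m, bit s t = ε s) * G t := by
        intro t ht
        rw [ind_congr]
        constructor
        · intro H s hs
          exact H s (mem_range.mpr ((mem_range.mp hs).trans (Nat.lt_succ_self m)))
        · intro H s hs
          rcases Nat.lt_succ_iff_lt_or_eq.mp (mem_range.mp hs) with h' | h'
          · exact H s (mem_range.mpr h')
          · rw [h', bit_eq_zero_of_lt (mem_range.mp ht), h]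
      rw [Finset.sum_congr rfl hl, Finset.sum_congr rfl hu, ih]
      simp [h]
    · have h1 : ε m = 1 := zmod2_key _ h
      have hl : ∀ t ∈ range (2^m),
          ind (∀ s ∈ range (m+1), bit s t = ε s) * G t = 0 := by
        intro t ht
        rw [ind_of_not, zero_mul]
        intro H
        have := H m (self_mem_range_succ m)
        rw [bit_eq_zero_of_lt (mem_range.mp ht), h1] at this
        exact zero_ne_one this
      have hu : ∀ t ∈ range (2^m),
          ind (∀ s ∈ range (m+1), bit s (2^m + t) = ε s) * G (2^m + t)
            = ind (∀ s ∈ range m, bit s t = ε s) * G (2^m + t) := by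
        intro t ht
        rw [ind_congr]
        constructor
        · intro H s hs
          rw [← bit_low (mem_range.mp hs)]
          exact H s (mem_range.mpr ((mem_range.mp hs).trans (Nat.lt_succ_self m)))
        · intro H s hs
          rcases Nat.lt_succ_iff_lt_or_eq.mp (mem_range.mp hs) with h' | h'
          · rw [bit_low h']; exact H s (mem_range.mpr h')
          · rw [h', bit_high (mem_range.mp ht), h1]
      rw [Finset.sum_congr rfl hl, Finset.sum_congr rfl hu, Finset.sum_const, smul_zero,
        zero_add, ih (fun t => G (2^m + t)), h1, ZMod.val_one, one_mul]
      rw [Nat.add_comm]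

lemma sum_comm3 {α β γ M : Type*} [AddCommMonoid M] (s : Finset α) (t : Finset β) (w : Finset γ)
    (f : α → β → γ → M) :
    ∑ x ∈ s, ∑ y ∈ t, ∑ z ∈ w, f x y z = ∑ z ∈ w, ∑ x ∈ s, ∑ y ∈ t, f x y z := by
  rw [Finset.sum_congr rfl (fun x _ => Finset.sum_comm), Finset.sum_comm]

lemma sum_two_pow (k : ℕ) : (∑ j ∈ range k, 2 ^ j) = 2 ^ k - 1 := by
  induction k with
  | zero => simp
  | succ k ih =>
    rw [Finset.sum_range_succ, ih]
    have := Nat.one_le_two_pow (n := k)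
    have : (2:ℕ)^(k+1) = 2^k + 2^k := by ring
    omega

/-- Proposition 1: `2^{k-1} H_f(u) = ∑_t S_t ζ^t`, where
`S_t = ∑_j (-1)^{z_t · z_j} W_{g_j}(u)`. -/
theorem gwht_eq_sum_S (n k : ℕ) (hk : 2 ≤ k) (a : ℕ → BF n)
    (f : (Fin n → ZMod 2) → ZMod (2 ^ k)) (hf : coordExpand k a f) (u : Fin n → ZMod 2) :
    (2 ^ (k - 1) : ℂ) * gwht f u =
      ∑ t ∈ Finset.range (2 ^ (k - 1)),
        ((∑ j ∈ Finset.range (2 ^ (k - 1)), hadRow (k - 1) t j * walsh (component k a j) u : ℤ) : ℂ) *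
          Complex.exp (2 * Real.pi * Complex.I / ((2 ^ k : ℕ) : ℂ)) ^ t := by
  haveI : NeZero (2 ^ k) := ⟨by positivity⟩
  have hk1 : k - 1 + 1 = k := by omega
  rw [gwht, Finset.mul_sum]
  simp only [walsh, hadRow, Int.cast_sum, Int.cast_mul, Int.cast_pow, Int.cast_neg,
    Int.cast_one, Finset.sum_mul, Finset.mul_sum]
  rw [sum_comm3]
  apply Finset.sum_congr rfl
  intro x _
  set ζ : ℂ := Complex.exp (2 * Real.pi * Complex.I / ((2 ^ k : ℕ) : ℂ)) with hzdef
  -- ζ ^ 2^(k-1) = -1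
  have hztop : ζ ^ (2 ^ (k - 1)) = -1 := by
    rw [hzdef, ← Complex.exp_nat_mul]
    have h2 : ((2 ^ k : ℕ) : ℂ) = 2 * ((2 ^ (k - 1) : ℕ) : ℂ) := by
      rw [← hk1]; push_cast; ring
    have hne : ((2 ^ (k - 1) : ℕ) : ℂ) ≠ 0 := Nat.cast_ne_zero.mpr (by positivity)
    have harg : ((2 ^ (k - 1) : ℕ) : ℂ) * (2 * Real.pi * Complex.I / ((2 ^ k : ℕ) : ℂ))
        = Real.pi * Complex.I := by
      rw [h2]; field_simp
    rw [harg, Complex.exp_pi_mul_I]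
  -- value of f x
  have hval : (f x).val
      = (∑ s ∈ range (k - 1), (a s x).val * 2 ^ s) + 2 ^ (k - 1) * (a (k - 1) x).val := by
    have hfx : f x = ((∑ j ∈ range k, 2 ^ j * (a j x).val : ℕ) : ZMod (2 ^ k)) := by
      rw [hf x]; push_cast; rfl
    have hNlt : (∑ j ∈ range k, 2 ^ j * (a j x).val) < 2 ^ k := by
      have hle : (∑ j ∈ range k, 2 ^ j * (a j x).val) ≤ ∑ j ∈ range k, 2 ^ j := by
        apply Finset.sum_le_sum
        intro j _
        have := ZMod.val_lt (a j x)
        calc 2 ^ j * (a j x).val ≤ 2 ^ j * 1 := Nat.mul_le_mul_left _ (by omega)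
          _ = 2 ^ j := by ring
      have h1 := sum_two_pow k
      have h2 := Nat.one_le_two_pow (n := k)
      omega
    rw [hfx, ZMod.val_natCast_of_lt hNlt, ← hk1, Finset.sum_range_succ, hk1]
    congr 1
    exact Finset.sum_congr rfl (fun j _ => Nat.mul_comm _ _)
  -- collapse the j-sum for each t
  have hj : ∀ t ∈ range (2 ^ (k - 1)),
      (∑ j ∈ range (2 ^ (k - 1)),
        (-1 : ℂ) ^ (zdot (k - 1) t j).val * (-1) ^ (component k a j x + bdot u x).val * ζ ^ t)
      = ((-1 : ℂ) ^ (bdot u x).val * (-1) ^ (a (k - 1) x).val * 2 ^ (k - 1))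
          * (ind (∀ s ∈ range (k - 1), bit s t = a s x) * ζ ^ t) := by
    intro t _
    have hterm : ∀ j ∈ range (2 ^ (k - 1)),
        (-1 : ℂ) ^ (zdot (k - 1) t j).val * (-1) ^ (component k a j x + bdot u x).val * ζ ^ t
        = ((-1 : ℂ) ^ ((∑ s ∈ range (k - 1), bit s j * (bit s t + a s x)).val)
            * ((-1) ^ (a (k - 1) x).val * (-1) ^ (bdot u x).val)) * ζ ^ t := by
      intro j _
      have hc : component k a j x + bdot u x
          = (a (k - 1) x + ∑ s ∈ range (k - 1), bit s j * a s x) + bdot u x := rfl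
      rw [hc, chi_add, chi_add]
      have harg : zdot (k - 1) t j + ∑ s ∈ range (k - 1), bit s j * a s x
          = ∑ s ∈ range (k - 1), bit s j * (bit s t + a s x) := by
        rw [zdot, ← Finset.sum_add_distrib]
        exact Finset.sum_congr rfl (fun s _ => by ring)
      rw [← harg, chi_add]
      ring
    rw [Finset.sum_congr rfl hterm, ← Finset.sum_mul, ← Finset.sum_mul,
      orth (k - 1) (fun s => bit s t + a s x)]
    rw [ind_congr (show (∀ s ∈ range (k - 1), bit s t + a s x = 0)
        ↔ (∀ s ∈ range (k - 1), bit s t = a s x) from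
      forall₂_congr (fun s _ => zmod2_add_eq_zero _ _))]
    ring
  rw [Finset.sum_congr rfl hj, ← Finset.mul_sum,
    sum_bits_select (k - 1) (fun s => a s x) (fun t => ζ ^ t)]
  -- final scalar identity
  have hfinal : ζ ^ (f x).val
      = (-1 : ℂ) ^ (a (k - 1) x).val * ζ ^ (∑ s ∈ range (k - 1), (a s x).val * 2 ^ s) := by
    rw [hval, pow_add, pow_mul, hztop]
    ring
  rw [hfinal]
  ring
end

section
/- Let n be even, k ≥ 3, and suppose all component functions g₀,…,g_{2^{k−1}−1} of f : 𝔽₂ⁿ → ℤ_{2^k} are bent. Fix u ∈ 𝔽₂ⁿ. Then there exist r ∈ {0,…,2^{k−1}−1} and a sign ε ∈ {1,−1} with W_{g_j}(u) = ε·2^{n/2}·(−1)^{z_r·z_j} for all j, if and only if for any four pairwise distinct integers j, c, l, v ∈ {0,…,2^{k−1}−1} with z_j ⊕ z_c ⊕ z_l ⊕ z_v = 0 one has W_{g_j}(u)·W_{g_c}(u) = W_{g_l}(u)·W_{g_v}(u). -/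
open Finset

lemma zmod2_pow_add : ∀ x y : ZMod 2,
    (-1:ℤ)^(x+y).val = (-1:ℤ)^x.val * (-1:ℤ)^y.val := by decide

lemma zmod2_pow_inj : ∀ x y : ZMod 2,
    (-1:ℤ)^x.val = (-1:ℤ)^y.val → x = y := by decide

lemma bit_zero (t : ℕ) : bit t 0 = 0 := by
  unfold bit; simp [Nat.zero_testBit]

lemma exists_bits (M : ℕ) (d : ℕ → ZMod 2) : ∃ r < 2 ^ M, ∀ t < M, bit t r = d t := by
  induction M with
  | zero => exact ⟨0, by norm_num, fun t ht => absurd ht (Nat.not_lt_zero t)⟩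
  | succ M ih =>
    obtain ⟨r, hr, hbit⟩ := ih
    have h2 : (2:ℕ) ^ (M+1) = 2 ^ M + 2 ^ M := by ring
    by_cases hd : d M = 1
    · refine ⟨2 ^ M + r, by omega, fun t ht => ?_⟩
      rcases Nat.lt_succ_iff_lt_or_eq.mp ht with h | h
      · have : bit t (2^M + r) = bit t r := by
          unfold bit; rw [Nat.testBit_two_pow_add_gt h]
        rw [this, hbit t h]
      · subst h
        unfold bit
        rw [Nat.testBit_two_pow_add_eq, Nat.testBit_lt_two_pow hr]
        simp [hd]
    · have hd0 : d M = 0 := by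
        have : ∀ x : ZMod 2, x ≠ 1 → x = 0 := by decide
        exact this _ hd
      refine ⟨r, by omega, fun t ht => ?_⟩
      rcases Nat.lt_succ_iff_lt_or_eq.mp ht with h | h
      · exact hbit t h
      · subst h
        unfold bit
        rw [Nat.testBit_lt_two_pow hr]
        simp [hd0]

lemma lin_expand (m : ℕ) (L : ℕ → ZMod 2) (h0 : L 0 = 0)
    (hadd : ∀ j < 2 ^ m, ∀ c < 2 ^ m, L (j ^^^ c) = L j + L c) :
    ∀ M, M ≤ m → ∀ j < 2 ^ M, L j = ∑ t ∈ Finset.range M, bit t j * L (2 ^ t) := by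
  intro M
  induction M with
  | zero =>
    intro _ j hj
    interval_cases j
    simpa using h0
  | succ M ih =>
    intro hMm j hj
    rw [Finset.sum_range_succ]
    have hpow : (2:ℕ) ^ (M+1) = 2 ^ M * 2 := by ring
    by_cases hbT : j.testBit M
    · -- high bit set
      set j' := j ^^^ 2 ^ M with hj'def
      have hhigh : ∀ t, M ≤ t → j'.testBit t = false := by
        intro t ht
        rw [hj'def, Nat.testBit_xor, Nat.testBit_two_pow]
        rcases eq_or_lt_of_le ht with h | h
        · subst h
          simp [hbT]
        · have h1 : j.testBit t = false :=
            Nat.testBit_lt_two_pow (lt_of_lt_of_le hj (Nat.pow_le_pow_right (by norm_num) h))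
          simp [h1, Nat.ne_of_lt h]
      have hmod : j' % 2 ^ M = j' := by
        apply Nat.eq_of_testBit_eq
        intro t
        rw [Nat.testBit_mod_two_pow]
        by_cases h : t < M
        · simp [h]
        · simp [h, hhigh t (le_of_not_gt h)]
      have hjlt' : j' < 2 ^ M := by
        rw [← hmod]; exact Nat.mod_lt _ (Nat.pow_pos (by norm_num))
      have hx : j = j' ^^^ 2 ^ M := by rw [hj'def, xor_cancel_right]
      have hmlt : (2:ℕ) ^ M < 2 ^ m := by
        exact Nat.pow_lt_pow_right (by norm_num) (by omega)
      have hLj : L j = L j' + L (2 ^ M) := by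
        rw [hx]
        exact hadd j' (by omega) (2 ^ M) hmlt
      have hbits : ∀ t < M, bit t j' = bit t j := by
        intro t ht
        unfold bit
        rw [hj'def, Nat.testBit_xor, Nat.testBit_two_pow]
        simp [Nat.ne_of_gt ht]
      have hbM : bit M j = 1 := by unfold bit; simp [hbT]
      rw [hLj, ih (by omega) j' hjlt', hbM, one_mul]
      congr 1
      exact Finset.sum_congr rfl fun t ht => by
        rw [hbits t (Finset.mem_range.mp ht)]
    · -- high bit clear
      have hjM : j < 2 ^ M := by
        by_contra h
        push_neg at h
        have hdiv : j / 2 ^ M = 1 :=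
          Nat.div_eq_of_lt_le (by omega) (by omega)
        rw [Nat.testBit_eq_decide_div_mod_eq, hdiv] at hbT
        simp at hbT
      have hbM : bit M j = 0 := by
        unfold bit; simp [hbT]
      rw [ih (by omega) j hjM, hbM, zero_mul, add_zero]

/-- Proposition 2(i): for even `n` and bent component functions, the Walsh spectrum vector at `u`
is `± 2^{n/2}` times a Hadamard row iff the quadruple condition
`W_{g_j}(u) W_{g_c}(u) = W_{g_l}(u) W_{g_v}(u)` holds. -/
theorem hadamard_row_iff_walsh_quadruples_even (n k : ℕ) (hn : Even n) (hk : 3 ≤ k)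
    (a : ℕ → BF n) (f : (Fin n → ZMod 2) → ZMod (2 ^ k)) (hf : coordExpand k a f)
    (hbent : ∀ i < 2 ^ (k - 1), IsBent (component k a i)) (u : Fin n → ZMod 2) :
    (∃ r < 2 ^ (k - 1), ∃ ε : ℤ, (ε = 1 ∨ ε = -1) ∧
        ∀ j < 2 ^ (k - 1),
          walsh (component k a j) u = ε * 2 ^ (n / 2) * hadRow (k - 1) r j) ↔
      (∀ j < 2 ^ (k - 1), ∀ c < 2 ^ (k - 1), ∀ l < 2 ^ (k - 1), ∀ v < 2 ^ (k - 1),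
        j ≠ c → j ≠ l → j ≠ v → c ≠ l → c ≠ v → l ≠ v → j ^^^ c ^^^ l ^^^ v = 0 →
        walsh (component k a j) u * walsh (component k a c) u =
          walsh (component k a l) u * walsh (component k a v) u) := by
  have hP : (0:ℤ) < 2 ^ (n / 2) := by positivity
  have hsign : ∀ j < 2 ^ (k - 1),
      walsh (component k a j) u = 2 ^ (n/2) ∨ walsh (component k a j) u = -2 ^ (n/2) :=
    fun j hj => (abs_eq hP.le).mp (hbent j hj u)
  constructor
  · rintro ⟨r, hr, ε, hε, hWr⟩ j hj c hc l hl v hv _ _ _ _ _ _ hxor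
    have hlv : j ^^^ c = l ^^^ v := by
      have h1 : j ^^^ c ^^^ l = v := xor_eq_zero_iff.mp hxor
      calc j ^^^ c = j ^^^ c ^^^ l ^^^ l := (xor_cancel_right _ _).symm
        _ = v ^^^ l := by rw [h1]
        _ = l ^^^ v := Nat.xor_comm _ _
    have hz : zdot (k-1) r j + zdot (k-1) r c = zdot (k-1) r l + zdot (k-1) r v := by
      rw [← zdot_xor, ← zdot_xor, hlv]
    have e1 : hadRow (k-1) r j * hadRow (k-1) r c = hadRow (k-1) r l * hadRow (k-1) r v := by
      unfold hadRow
      rw [← zmod2_pow_add, ← zmod2_pow_add, hz]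
    rw [hWr j hj, hWr c hc, hWr l hl, hWr v hv]
    rcases hε with h | h <;> subst h <;>
      linear_combination ((2:ℤ)^(n/2)) * ((2:ℤ)^(n/2)) * e1
  · intro hquad
    set m := k - 1 with hmdef
    have hpos : (0:ℕ) < 2 ^ m := Nat.pow_pos (by norm_num)
    set b : ℕ → ZMod 2 :=
      fun j => if walsh (component k a j) u = 2 ^ (n/2) then 0 else 1 with hbdef
    have hb : ∀ j < 2 ^ m,
        walsh (component k a j) u = 2 ^ (n/2) * (-1:ℤ) ^ (b j).val := by
      intro j hj
      rcases hsign j hj with h | h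
      · simp [hbdef, h]
      · have hne : walsh (component k a j) u ≠ 2 ^ (n/2) := by
          rw [h]; intro hc; nlinarith
        have hne' : ¬ (-(2:ℤ)^(n/2) = 2^(n/2)) := by intro hc; nlinarith
        rw [hbdef]
        simp only [h]
        rw [if_neg hne']
        have h1 : ((1 : ZMod 2)).val = 1 := rfl
        rw [h1, pow_one]
        ring
    set L : ℕ → ZMod 2 := fun j => b j + b 0 with hLdef
    have h2z : ∀ x : ZMod 2, x + x = 0 := by decide
    have hL0 : L 0 = 0 := h2z (b 0)
    have hadd : ∀ j < 2 ^ m, ∀ c < 2 ^ m, L (j ^^^ c) = L j + L c := by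
      intro j hj c hc
      rcases eq_or_ne j 0 with rfl | hj0
      · show b (0 ^^^ c) + b 0 = (b 0 + b 0) + (b c + b 0)
        rw [Nat.zero_xor, h2z (b 0), zero_add]
      rcases eq_or_ne c 0 with rfl | hc0
      · show b (j ^^^ 0) + b 0 = (b j + b 0) + (b 0 + b 0)
        rw [Nat.xor_zero, h2z (b 0), add_zero]
      rcases eq_or_ne j c with rfl | hjc
      · show b (j ^^^ j) + b 0 = (b j + b 0) + (b j + b 0)
        rw [Nat.xor_self, h2z (b j + b 0), h2z (b 0)]
      · have hx : j ^^^ c < 2 ^ m := Nat.xor_lt_two_pow hj hc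
        have hne1 : j ≠ j ^^^ c := by
          intro h
          apply hc0
          have h1 : j ^^^ (j ^^^ c) = c := xor_cancel_left _ _
          rw [← h, Nat.xor_self] at h1
          exact h1.symm
        have hne2 : c ≠ j ^^^ c := by
          intro h
          apply hj0
          have h1 : j ^^^ c ^^^ c = j := xor_cancel_right _ _
          rw [← h] at h1
          rw [Nat.xor_self] at h1
          exact h1.symm
        have hne3 : (0:ℕ) ≠ j ^^^ c := by
          intro h
          exact hjc (xor_eq_zero_iff.mp h.symm)
        have hxc : j ^^^ c ^^^ 0 ^^^ (j ^^^ c) = 0 := by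
          rw [Nat.xor_zero, Nat.xor_self]
        have hq := hquad j hj c hc 0 hpos (j ^^^ c) hx hjc hj0 hne1 hc0 hne2 hne3 hxc
        rw [hb j hj, hb c hc, hb 0 hpos, hb _ hx] at hq
        have hq2 : ((2:ℤ)^(n/2) * 2^(n/2)) * ((-1:ℤ)^(b j + b c).val)
            = ((2:ℤ)^(n/2) * 2^(n/2)) * ((-1:ℤ)^(b 0 + b (j^^^c)).val) := by
          rw [zmod2_pow_add, zmod2_pow_add]
          linear_combination hq
        have hq3 : b j + b c = b 0 + b (j ^^^ c) :=
          zmod2_pow_inj _ _ (mul_left_cancel₀ (mul_pos hP hP).ne' hq2)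
        have solve : ∀ x y z w : ZMod 2, x + y = z + w → w + z = (x + z) + (y + z) := by
          decide
        show b (j ^^^ c) + b 0 = (b j + b 0) + (b c + b 0)
        exact solve _ _ _ _ hq3
    obtain ⟨r, hrlt, hrbit⟩ := exists_bits m (fun t => L (2 ^ t))
    refine ⟨r, hrlt, (-1:ℤ) ^ (b 0).val, ?_, ?_⟩
    · have : ∀ x : ZMod 2, (-1:ℤ)^x.val = 1 ∨ (-1:ℤ)^x.val = -1 := by decide
      exact this _
    · intro j hj
      have hLj : L j = zdot m r j := by
        rw [lin_expand m L hL0 hadd m le_rfl j hj]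
        unfold zdot
        refine Finset.sum_congr rfl fun t ht => ?_
        rw [hrbit t (Finset.mem_range.mp ht)]
        ring
      have hbj : b j = b 0 + L j := by
        show b j = b 0 + (b j + b 0)
        have : ∀ x y : ZMod 2, x = y + (x + y) := by decide
        exact this _ _
      rw [hb j hj, hbj, hLj]
      unfold hadRow
      rw [zmod2_pow_add]
      ring
end

section
/- Let n be odd, k ≥ 3, and suppose all component functions g₀,…,g_{2^{k−1}−1} of f : 𝔽₂ⁿ → ℤ_{2^k} are semi-bent. Fix u ∈ 𝔽₂ⁿ. Then there exist r ∈ {0,…,2^{k−2}−1} and a sign ε ∈ {1,−1} such that W_{g_j}(u) = ε·2^{(n+1)/2}·(−1)^{z_r·z_j} for all 0 ≤ j ≤ 2^{k−2}−1 and W_{g_j}(u) = 0 for all 2^{k−2} ≤ j ≤ 2^{k−1}−1, if and only if: W_{g_j}(u) = 0 for all 2^{k−2} ≤ j ≤ 2^{k−1}−1, W_{g_j}(u) ≠ 0 for all 0 ≤ j ≤ 2^{k−2}−1, and for any four pairwise distinct integers j, c, l, v ∈ {0,…,2^{k−2}−1} with z_j ⊕ z_c ⊕ z_l ⊕ z_v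 = 0 one has W_{g_j}(u)·W_{g_c}(u) = W_{g_l}(u)·W_{g_v}(u). -/
open Finset

lemma neg_one_pow_add (x y : ZMod 2) :
    (-1:ℤ)^(x+y).val = (-1:ℤ)^x.val * (-1:ℤ)^y.val := by
  revert x y; decide

lemma zmod2_cancel (a b c d : ZMod 2)
    (h : (-1:ℤ)^a.val * (-1:ℤ)^b.val = (-1:ℤ)^c.val * (-1:ℤ)^d.val) : a + b = c + d := by
  revert h; revert a b c d; decide

lemma bit_of_lt {m t j : ℕ} (hj : j < 2^m) (ht : m ≤ t) : bit t j = 0 := by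
  unfold bit
  rw [Nat.testBit_lt_two_pow (lt_of_lt_of_le hj (Nat.pow_le_pow_right (by norm_num) ht))]
  rfl

lemma xor_two_pow {a m : ℕ} (h : a < 2^m) : a ^^^ 2^m = a + 2^m := by
  apply Nat.eq_of_testBit_eq
  intro i
  have h1 : a + 2^m = 2^m * 1 + a := by ring
  rw [h1, Nat.testBit_two_pow_mul_add 1 h i, Nat.testBit_xor, Nat.testBit_two_pow]
  rcases lt_trichotomy i m with hi | hi | hi
  · simp [hi, Nat.ne_of_gt hi]
  · subst hi
    simp [Nat.testBit_lt_two_pow h]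
  · have : Nat.testBit a i = false :=
      Nat.testBit_lt_two_pow (h.trans_le (Nat.pow_le_pow_right (by norm_num) hi.le))
    have h2 : Nat.testBit 1 (i - m) = false := by
      rw [← Bool.not_eq_true, Nat.testBit_one_eq_true_iff_self_eq_zero]
      omega
    simp [this, h2, Nat.ne_of_lt hi, Nat.not_lt.mpr hi.le]

lemma zmod2_if (z : ZMod 2) : (if decide (z.val % 2 = 1) = true then (1:ZMod 2) else 0) = z := by
  revert z; decide

lemma exists_row (m : ℕ) (b : ℕ → ZMod 2) (h0 : b 0 = 0)
    (hadd : ∀ j < 2^m, ∀ c < 2^m, b (j ^^^ c) = b j + b c) :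
    ∃ r < 2^m, ∀ j < 2^m, b j = zdot m r j := by
  induction m with
  | zero =>
    refine ⟨0, by norm_num, fun j hj => ?_⟩
    interval_cases j
    simpa [zdot] using h0
  | succ m ih =>
    obtain ⟨r₀, hr₀, hr⟩ := ih (fun j hj c hc =>
      hadd j (hj.trans_le (Nat.pow_le_pow_right (by norm_num) (Nat.le_succ m)))
        c (hc.trans_le (Nat.pow_le_pow_right (by norm_num) (Nat.le_succ m))))
    have hev : (b (2^m)).val < 2 := ZMod.val_lt _
    refine ⟨(b (2^m)).val * 2^m + r₀, ?_, ?_⟩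
    · have h2 : (2:ℕ)^(m+1) = 2^m + 2^m := by ring
      have h3 := Nat.mul_le_mul_right (2^m) (show (b (2^m)).val ≤ 1 by omega)
      omega
    · -- bits of r
      have hbt : ∀ t < m, bit t ((b (2^m)).val * 2^m + r₀) = bit t r₀ := by
        intro t ht
        unfold bit
        rw [show (b (2^m)).val * 2^m + r₀ = 2^m * (b (2^m)).val + r₀ by ring,
          Nat.testBit_two_pow_mul_add _ hr₀ t, if_pos ht]
      have hbm : bit m ((b (2^m)).val * 2^m + r₀) = b (2^m) := by
        unfold bit
        rw [show (b (2^m)).val * 2^m + r₀ = 2^m * (b (2^m)).val + r₀ by ring,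
          Nat.testBit_two_pow_mul_add _ hr₀ m, if_neg (lt_irrefl m), Nat.sub_self,
          Nat.testBit_zero]
        exact zmod2_if _
      intro j hj
      by_cases hjm : j < 2^m
      · rw [hr j hjm]
        unfold zdot
        rw [Finset.sum_range_succ, bit_of_lt hjm le_rfl, mul_zero, add_zero]
        exact Finset.sum_congr rfl fun t ht => by rw [hbt t (Finset.mem_range.mp ht)]
      · push_neg at hjm
        set j₁ := j - 2^m with hj₁def
        have hj₁ : j₁ < 2^m := by
          have h2 : (2:ℕ)^(m+1) = 2^m + 2^m := by ring
          omega
        have hjx : j = j₁ ^^^ 2^m := by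
          rw [xor_two_pow hj₁]; omega
        have hb : b j = b j₁ + b (2^m) := by
          rw [hjx]
          have hlt : (2:ℕ)^m < 2^(m+1) := Nat.pow_lt_pow_succ (by norm_num)
          exact hadd j₁ (hj₁.trans hlt) (2^m) hlt
        have hjrepr : j = 2^m * 1 + j₁ := by omega
        have hbtj : ∀ t < m, bit t j = bit t j₁ := by
          intro t ht
          unfold bit
          rw [hjrepr, Nat.testBit_two_pow_mul_add _ hj₁ t, if_pos ht]
        have hbmj : bit m j = 1 := by
          unfold bit
          rw [hjrepr, Nat.testBit_two_pow_mul_add _ hj₁ m, if_neg (lt_irrefl m), Nat.sub_self]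
          simp
        rw [hb, hr j₁ hj₁]
        unfold zdot
        rw [Finset.sum_range_succ, hbmj, hbm, mul_one]
        congr 1
        exact Finset.sum_congr rfl fun t ht => by
          rw [hbt t (Finset.mem_range.mp ht), hbtj t (Finset.mem_range.mp ht)]

lemma hadRow_pm (m r j : ℕ) : hadRow m r j = 1 ∨ hadRow m r j = -1 := by
  unfold hadRow
  rcases Nat.even_or_odd (zdot m r j).val with h | h
  · exact Or.inl h.neg_one_pow
  · exact Or.inr h.neg_one_pow

lemma zmod2_add_self (z : ZMod 2) : z + z = 0 := by revert z; decide

lemma neg_one_pow_sq (z : ZMod 2) : (-1:ℤ)^z.val * (-1:ℤ)^z.val = 1 := by revert z; decide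

lemma neg_one_pow_pm (z : ZMod 2) : (-1:ℤ)^z.val = 1 ∨ (-1:ℤ)^z.val = -1 := by revert z; decide

/-- Proposition 2(ii): for odd `n` and semi-bent component functions, the Walsh spectrum vector
at `u` equals `(± 2^{(n+1)/2} H_{2^{k-2}}^{(r)}, 0)` iff the second half vanishes, the first half
is nonzero, and the quadruple condition holds on the first half. -/
theorem hadamard_row_iff_walsh_quadruples_odd (n k : ℕ) (hn : Odd n) (hk : 3 ≤ k)
    (a : ℕ → BF n) (f : (Fin n → ZMod 2) → ZMod (2 ^ k)) (hf : coordExpand k a f)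
    (hsb : ∀ i < 2 ^ (k - 1), IsSemiBent (component k a i)) (u : Fin n → ZMod 2) :
    (∃ r < 2 ^ (k - 2), ∃ ε : ℤ, (ε = 1 ∨ ε = -1) ∧
        (∀ j < 2 ^ (k - 2),
          walsh (component k a j) u = ε * 2 ^ ((n + 1) / 2) * hadRow (k - 2) r j) ∧
        (∀ j, 2 ^ (k - 2) ≤ j → j < 2 ^ (k - 1) → walsh (component k a j) u = 0)) ↔
      ((∀ j, 2 ^ (k - 2) ≤ j → j < 2 ^ (k - 1) → walsh (component k a j) u = 0) ∧
        (∀ j < 2 ^ (k - 2), walsh (component k a j) u ≠ 0) ∧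
        (∀ j < 2 ^ (k - 2), ∀ c < 2 ^ (k - 2), ∀ l < 2 ^ (k - 2), ∀ v < 2 ^ (k - 2),
          j ≠ c → j ≠ l → j ≠ v → c ≠ l → c ≠ v → l ≠ v → j ^^^ c ^^^ l ^^^ v = 0 →
          walsh (component k a j) u * walsh (component k a c) u =
            walsh (component k a l) u * walsh (component k a v) u)) := by
  constructor
  · rintro ⟨r, hr, ε, hε, hfirst, hsecond⟩
    refine ⟨hsecond, ?_, ?_⟩
    · intro j hj
      rw [hfirst j hj]
      have hεne : ε ≠ 0 := by rcases hε with h | h <;> simp [h]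
      have hHne : hadRow (k - 2) r j ≠ 0 := by
        rcases hadRow_pm (k - 2) r j with h | h <;> simp [h]
      have h2 : (2:ℤ)^((n+1)/2) ≠ 0 := by positivity
      exact mul_ne_zero (mul_ne_zero hεne h2) hHne
    · intro j hj c hc l hl v hv _ _ _ _ _ _ hxor
      have hlv : j ^^^ c = l ^^^ v := by
        rw [Nat.xor_assoc] at hxor
        exact xor_eq_zero_iff.mp hxor
      have hprod : hadRow (k-2) r j * hadRow (k-2) r c
          = hadRow (k-2) r l * hadRow (k-2) r v := by
        unfold hadRow
        rw [← neg_one_pow_add, ← neg_one_pow_add, ← zdot_xor, ← zdot_xor, hlv]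
      rw [hfirst j hj, hfirst c hc, hfirst l hl, hfirst v hv]
      linear_combination (ε * 2^((n+1)/2))^2 * hprod
  · rintro ⟨hzero, hnonzero, hquad⟩
    have hm : (2:ℕ)^(k-2) ≤ 2^(k-1) := Nat.pow_le_pow_right (by norm_num) (by omega)
    have hW : ∀ j < 2^(k-2), walsh (component k a j) u = 2^((n+1)/2) ∨
        walsh (component k a j) u = -2^((n+1)/2) :=
      fun j hj => (hsb j (lt_of_lt_of_le hj hm) u).resolve_left (hnonzero j hj)
    set b : ℕ → ZMod 2 :=
      fun j => if walsh (component k a j) u = 2^((n+1)/2) then 0 else 1 with hbdef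
    have h2s : (2:ℤ)^((n+1)/2) ≠ 0 := by positivity
    have h2pos : (0:ℤ) < 2^((n+1)/2) := by positivity
    have hWb : ∀ j < 2^(k-2),
        walsh (component k a j) u = 2^((n+1)/2) * (-1:ℤ)^(b j).val := by
      intro j hj
      rcases hW j hj with h | h
      · simp [hbdef, h]
      · have hne2 : (-2^((n+1)/2) : ℤ) ≠ 2^((n+1)/2) := by intro hx; linarith
        simp only [hbdef, h, if_neg hne2, ZMod.val_one, pow_one, mul_neg_one]
    have hpos : (0:ℕ) < 2^(k-2) := Nat.pow_pos (by norm_num)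
    have hadd : ∀ j < 2^(k-2), ∀ c < 2^(k-2), b (j ^^^ c) + b 0 = b j + b c := by
      intro j hj c hc
      by_cases hjc : j = c
      · subst hjc
        rw [Nat.xor_self, zmod2_add_self, zmod2_add_self]
      · by_cases hj0 : j = 0
        · subst hj0
          rw [Nat.zero_xor]
          ring
        · by_cases hc0 : c = 0
          · subst hc0
            rw [Nat.xor_zero]
          · have hjcne : j ^^^ c ≠ 0 := fun h => hjc (xor_eq_zero_iff.mp h)
            have hjx : j ≠ j ^^^ c := by
              intro h
              apply hc0
              have h2 : j ^^^ j = j ^^^ (j ^^^ c) := by rw [← h]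
              rw [Nat.xor_self, ← Nat.xor_assoc, Nat.xor_self, Nat.zero_xor] at h2
              exact h2.symm
            have hcx : c ≠ j ^^^ c := by
              intro h
              apply hj0
              have h2 : c ^^^ c = c ^^^ (j ^^^ c) := by rw [← h]
              rw [Nat.xor_self, Nat.xor_comm j c, ← Nat.xor_assoc, Nat.xor_self,
                Nat.zero_xor] at h2
              exact h2.symm
            have hxc : j ^^^ c < 2^(k-2) := Nat.xor_lt_two_pow hj hc
            have hq := hquad j hj c hc 0 hpos (j ^^^ c) hxc hjc hj0
              hjx hc0 hcx (Ne.symm hjcne) (by simp)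
            rw [hWb j hj, hWb c hc, hWb 0 hpos, hWb (j ^^^ c) hxc] at hq
            have hq2 : (2^((n+1)/2) * 2^((n+1)/2)) *
                ((-1:ℤ)^(b j).val * (-1:ℤ)^(b c).val) =
                (2^((n+1)/2) * 2^((n+1)/2)) *
                ((-1:ℤ)^(b 0).val * (-1:ℤ)^(b (j ^^^ c)).val) := by
              linear_combination hq
            have hc2 := zmod2_cancel _ _ _ _
              (mul_left_cancel₀ (mul_ne_zero h2s h2s) hq2)
            rw [hc2]
            ring
    obtain ⟨r, hrlt, hrow⟩ := exists_row (k-2) (fun j => b j + b 0)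
      (zmod2_add_self _)
      (fun j hj c hc => by
        have := hadd j hj c hc
        rw [this]
        linear_combination (-1 : ZMod 2) * zmod2_add_self (b 0))
    refine ⟨r, hrlt, (-1:ℤ)^(b 0).val, neg_one_pow_pm _, ?_, hzero⟩
    intro j hj
    rw [hWb j hj]
    unfold hadRow
    rw [← hrow j hj, neg_one_pow_add]
    linear_combination -(2^((n+1)/2) * (-1:ℤ)^(b j).val) * (neg_one_pow_sq (b 0))
end

section
/- Let n be even and let g₀, g₁, g₂, g₃ : 𝔽₂ⁿ → 𝔽₂ be bent functions with g₀ ⊕ g₁ ⊕ g₂ ⊕ g₃ = 0. Then the function g₀g₁ ⊕ g₀g₂ ⊕ g₁g₂ is bent if and only if g₀* ⊕ g₁* ⊕ g₂* ⊕ g₃* = 0, and in that case its dual is g₀*g₁* ⊕ g₀*g₂* ⊕ g₁*g₂*. -/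
open Finset

lemma key_sign (a b c e : ZMod 2) :
    2 * (-1 : ℤ) ^ ((a * b + a * c + b * c + e).val) =
      (-1 : ℤ) ^ ((a + e).val) + (-1 : ℤ) ^ ((b + e).val) + (-1 : ℤ) ^ ((c + e).val)
        - (-1 : ℤ) ^ ((a + b + c + e).val) := by revert a b c e; decide

lemma key_sign0 (a b c : ZMod 2) :
    (-1 : ℤ) ^ a.val + (-1 : ℤ) ^ b.val + (-1 : ℤ) ^ c.val - (-1 : ℤ) ^ ((a + b + c).val) =
      2 * (-1 : ℤ) ^ ((a * b + a * c + b * c).val) := by revert a b c; decide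

lemma key_abs (a b c d : ZMod 2)
    (h : |(-1 : ℤ) ^ a.val + (-1 : ℤ) ^ b.val + (-1 : ℤ) ^ c.val - (-1 : ℤ) ^ d.val| = 2) :
    a + b + c + d = 0 := by revert a b c d h; decide

lemma sum_eq_zero_iff (a b c d : ZMod 2) (h : a + b + c + d = 0) : d = a + b + c := by
  revert h; revert a b c d; decide

lemma walsh_double {n : ℕ} (g₀ g₁ g₂ g₃ : BF n)
    (hsum : ∀ x, g₀ x + g₁ x + g₂ x + g₃ x = 0) (u : Fin n → ZMod 2) :
    2 * walsh (fun x => g₀ x * g₁ x + g₀ x * g₂ x + g₁ x * g₂ x) u =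
      walsh g₀ u + walsh g₁ u + walsh g₂ u - walsh g₃ u := by
  unfold walsh
  rw [Finset.mul_sum, ← Finset.sum_add_distrib, ← Finset.sum_add_distrib,
    ← Finset.sum_sub_distrib]
  refine Finset.sum_congr rfl fun x _ => ?_
  rw [sum_eq_zero_iff _ _ _ _ (hsum x)]
  exact key_sign _ _ _ _

/-- Proposition 3 (Carlet/Mesnager): for bent `g₀, g₁, g₂, g₃` with `g₀ ⊕ g₁ ⊕ g₂ ⊕ g₃ = 0`,
the function `g₀g₁ ⊕ g₀g₂ ⊕ g₁g₂` is bent iff `g₀* ⊕ g₁* ⊕ g₂* ⊕ g₃* = 0`, and in that case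
its dual is `g₀*g₁* ⊕ g₀*g₂* ⊕ g₁*g₂*`. -/
theorem bent_quadruple_secondary_construction (n : ℕ) (hn : Even n) (g₀ g₁ g₂ g₃ : BF n)
    (hb₀ : IsBent g₀) (hb₁ : IsBent g₁) (hb₂ : IsBent g₂) (hb₃ : IsBent g₃)
    (hsum : ∀ x, g₀ x + g₁ x + g₂ x + g₃ x = 0)
    (d₀ d₁ d₂ d₃ : BF n)
    (hd₀ : IsDual g₀ d₀) (hd₁ : IsDual g₁ d₁) (hd₂ : IsDual g₂ d₂) (hd₃ : IsDual g₃ d₃) :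
    (IsBent (fun x => g₀ x * g₁ x + g₀ x * g₂ x + g₁ x * g₂ x) ↔
        ∀ u, d₀ u + d₁ u + d₂ u + d₃ u = 0) ∧
      ((∀ u, d₀ u + d₁ u + d₂ u + d₃ u = 0) →
        IsDual (fun x => g₀ x * g₁ x + g₀ x * g₂ x + g₁ x * g₂ x)
          (fun u => d₀ u * d₁ u + d₀ u * d₂ u + d₁ u * d₂ u)) := by
  have hW : ∀ u, 2 * walsh (fun x => g₀ x * g₁ x + g₀ x * g₂ x + g₁ x * g₂ x) u =
      2 ^ (n / 2) * ((-1 : ℤ) ^ (d₀ u).val + (-1) ^ (d₁ u).val + (-1) ^ (d₂ u).val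
        - (-1) ^ (d₃ u).val) := by
    intro u
    rw [walsh_double g₀ g₁ g₂ g₃ hsum u, hd₀ u, hd₁ u, hd₂ u, hd₃ u]
    ring
  have hdual : (∀ u, d₀ u + d₁ u + d₂ u + d₃ u = 0) →
      IsDual (fun x => g₀ x * g₁ x + g₀ x * g₂ x + g₁ x * g₂ x)
        (fun u => d₀ u * d₁ u + d₀ u * d₂ u + d₁ u * d₂ u) := by
    intro hds u
    have h := hW u
    rw [sum_eq_zero_iff _ _ _ _ (hds u), key_sign0] at h
    have h2 : (2 : ℤ) * walsh (fun x => g₀ x * g₁ x + g₀ x * g₂ x + g₁ x * g₂ x) u =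
        2 * (2 ^ (n / 2) * (-1 : ℤ) ^ ((d₀ u * d₁ u + d₀ u * d₂ u + d₁ u * d₂ u).val)) := by
      rw [h]; ring
    exact mul_left_cancel₀ two_ne_zero h2
  refine ⟨⟨fun hbent u => ?_, fun hds u => ?_⟩, hdual⟩
  · have h := hW u
    have habs : |(2 : ℤ) * walsh (fun x => g₀ x * g₁ x + g₀ x * g₂ x + g₁ x * g₂ x) u|
        = 2 * 2 ^ (n / 2) := by
      rw [abs_mul, hbent u]; simp
    rw [h, abs_mul] at habs
    have hp : |(2 : ℤ) ^ (n / 2)| = 2 ^ (n / 2) := abs_of_pos (by positivity)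
    rw [hp] at habs
    have hs : |(-1 : ℤ) ^ (d₀ u).val + (-1) ^ (d₁ u).val + (-1) ^ (d₂ u).val
        - (-1) ^ (d₃ u).val| = 2 := by
      have hpos : (0 : ℤ) < 2 ^ (n / 2) := by positivity
      nlinarith [habs]
    exact key_abs _ _ _ _ hs
  · rw [hdual hds u, abs_mul]
    simp [abs_of_pos (show (0:ℤ) < 2 ^ (n/2) by positivity)]
end

section
/- Let g₀, g₁, g₂, g₃ : 𝔽₂ⁿ → 𝔽₂ be Boolean functions with g₀ ⊕ g₁ ⊕ g₂ ⊕ g₃ = 0, and let g = g₀g₁ ⊕ g₀g₂ ⊕ g₁g₂. Then for all u ∈ 𝔽₂ⁿ, W_g(u) = (1/2)·(W_{g₀}(u) + W_{g₁}(u) + W_{g₂}(u) − W_{g₃}(u)). -/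
open Finset

lemma ptwise : ∀ a b c e : ZMod 2,
    2 * (-1 : ℤ) ^ ((a * b + a * c + b * c) + e).val =
      (-1 : ℤ) ^ (a + e).val + (-1 : ℤ) ^ (b + e).val + (-1 : ℤ) ^ (c + e).val
        - (-1 : ℤ) ^ ((a + b + c) + e).val := by
  decide

/-- Carlet's lemma: if `g₀ ⊕ g₁ ⊕ g₂ ⊕ g₃ = 0` and `g = g₀g₁ ⊕ g₀g₂ ⊕ g₁g₂`, then
`W_g(u) = (W_{g₀}(u) + W_{g₁}(u) + W_{g₂}(u) − W_{g₃}(u))/2`. -/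
theorem walsh_of_majority_combination (n : ℕ) (g₀ g₁ g₂ g₃ : BF n)
    (hsum : ∀ x, g₀ x + g₁ x + g₂ x + g₃ x = 0) (u : Fin n → ZMod 2) :
    (walsh (fun x => g₀ x * g₁ x + g₀ x * g₂ x + g₁ x * g₂ x) u : ℚ) =
      ((walsh g₀ u : ℚ) + (walsh g₁ u : ℚ) + (walsh g₂ u : ℚ) - (walsh g₃ u : ℚ)) / 2 := by
  have key : 2 * walsh (fun x => g₀ x * g₁ x + g₀ x * g₂ x + g₁ x * g₂ x) u =
      walsh g₀ u + walsh g₁ u + walsh g₂ u - walsh g₃ u := by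
    unfold walsh
    rw [Finset.mul_sum]
    rw [← Finset.sum_add_distrib, ← Finset.sum_add_distrib, ← Finset.sum_sub_distrib]
    refine Finset.sum_congr rfl fun x _ => ?_
    have h3 : g₃ x = g₀ x + g₁ x + g₂ x := by
      have h4 : ∀ a b c d : ZMod 2, a + b + c + d = 0 → d = a + b + c := by decide
      exact h4 _ _ _ _ (hsum x)
    rw [h3]
    exact ptwise (g₀ x) (g₁ x) (g₂ x) (bdot u x)
  rw [eq_div_iff (by norm_num : (2:ℚ) ≠ 0)]
  have h2 := congrArg (fun z : ℤ => (z : ℚ)) key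
  push_cast at h2
  linarith [h2]
end

section
/- Let n be even, k ≥ 1, and f : 𝔽₂ⁿ → ℤ_{2^k} with coordinate functions a₀,…,a_{k−1}. Then f is ℤ_{2^k}-bent if and only if for every t = 0, 1, …, k−1 the function f_t : 𝔽₂ⁿ → ℤ_{2^{k−t}} given by f_t(x) = a₀(x) + 2a₁(x) + ⋯ + 2^{k−t−1}a_{k−t−1}(x) is gbent (with respect to q = 2^{k−t}). -/
open Finset

/-- `f : 𝔽₂ⁿ → ℤ_{2^k}` is `ℤ_{2^k}`-bent if `|∑_x ζ^{a f(x)} (-1)^{u·x}| = 2^{n/2}` for all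
`u` and all nonzero `a ∈ ℤ_{2^k}`. -/
def IsZqBent {n k : ℕ} (f : (Fin n → ZMod 2) → ZMod (2 ^ k)) : Prop :=
  ∀ a : ZMod (2 ^ k), a ≠ 0 → IsGbent fun x => a * f x

noncomputable def zeta (q : ℕ) : ℂ := Complex.exp (2 * Real.pi * Complex.I / (q : ℂ))


lemma zeta_pow_self (q : ℕ) (hq : q ≠ 0) : zeta q ^ q = 1 := by
  rw [zeta, ← Complex.exp_nat_mul]
  rw [mul_div_cancel₀]
  · exact Complex.exp_two_pi_mul_I
  · exact_mod_cast hq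


lemma zeta_pow_mod (q : ℕ) (hq : q ≠ 0) (m : ℕ) : zeta q ^ (m % q) = zeta q ^ m := by
  conv_rhs => rw [← Nat.div_add_mod m q]
  rw [pow_add, pow_mul, zeta_pow_self q hq, one_pow, one_mul]


lemma zeta_pow_val_natCast (q : ℕ) [NeZero q] (m : ℕ) :
    zeta q ^ ((m : ZMod q)).val = zeta q ^ m := by
  rw [ZMod.val_natCast, zeta_pow_mod q (NeZero.ne q)]


lemma zeta_pow_val_add (q : ℕ) [NeZero q] (c c' : ZMod q) :
    zeta q ^ (c + c').val = zeta q ^ c.val * zeta q ^ c'.val := by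
  rw [← pow_add, ← zeta_pow_val_natCast q (c.val + c'.val)]
  push_cast
  rw [ZMod.natCast_val, ZMod.natCast_val, ZMod.cast_id, ZMod.cast_id]


lemma conj_zeta_pow_val (q : ℕ) [NeZero q] (c : ZMod q) :
    (starRingEnd ℂ) (zeta q ^ c.val) = zeta q ^ (-c).val := by
  have h1 : zeta q ^ c.val * zeta q ^ (-c).val = 1 := by
    rw [← zeta_pow_val_add, add_neg_cancel]
    simp [ZMod.val_zero]
  have h2 : (starRingEnd ℂ) (zeta q ^ c.val) * zeta q ^ c.val = 1 := by
    rw [← Complex.normSq_eq_conj_mul_self]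
    norm_cast
    rw [← Complex.sq_norm, zeta]
    rw [norm_pow]
    have : ‖Complex.exp (2 * Real.pi * Complex.I / (q : ℂ))‖ = 1 := by
      rw [Complex.norm_exp]
      have : (2 * (Real.pi : ℂ) * Complex.I / (q : ℂ)).re = 0 := by
        simp [Complex.div_re, Complex.mul_re, Complex.mul_im]
      rw [this, Real.exp_zero]
    rw [this, one_pow, one_pow]
  calc (starRingEnd ℂ) (zeta q ^ c.val)
      = (starRingEnd ℂ) (zeta q ^ c.val) * (zeta q ^ c.val * zeta q ^ (-c).val) := by
        rw [h1, mul_one]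
    _ = zeta q ^ (-c).val := by rw [← mul_assoc, h2, one_mul]


/-- linear independence of low powers of `zeta (2^m)` over the integers. -/
lemma lin_indep {m : ℕ} (hm : 1 ≤ m) (c : ℕ → ℤ)
    (h : ∑ j ∈ range (2 ^ (m - 1)), (c j : ℂ) * zeta (2 ^ m) ^ j = 0) :
    ∀ j < 2 ^ (m - 1), c j = 0 := by
  intro j hj
  set d := 2 ^ (m - 1) with hd
  have hq : (2 : ℕ) ^ m ≠ 0 := pow_ne_zero _ two_ne_zero
  have hprim : IsPrimitiveRoot (zeta (2 ^ m)) (2 ^ m) := by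
    have := Complex.isPrimitiveRoot_exp (2 ^ m) hq
    simpa [zeta] using this
  have hmin : minpoly ℚ (zeta (2 ^ m)) = Polynomial.cyclotomic (2 ^ m) ℚ :=
    (Polynomial.cyclotomic_eq_minpoly_rat hprim (Nat.pos_of_ne_zero hq)).symm
  have hdeg : (minpoly ℚ (zeta (2 ^ m))).natDegree = d := by
    rw [hmin, Polynomial.natDegree_cyclotomic, Nat.totient_prime_pow Nat.prime_two hm]
    simp [hd]
  set p : Polynomial ℚ := ∑ i ∈ range d, Polynomial.C (c i : ℚ) * Polynomial.X ^ i with hp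
  have haev : Polynomial.aeval (zeta (2 ^ m)) p = 0 := by
    rw [hp, map_sum]
    rw [← h]
    apply Finset.sum_congr rfl
    intro i _
    simp [Polynomial.aeval_C]
  have hp0 : p = 0 := by
    by_contra hne
    have hdvd := minpoly.dvd ℚ (zeta (2 ^ m)) haev
    have hle := Polynomial.natDegree_le_of_dvd hdvd hne
    have hple : p.natDegree ≤ d - 1 := by
      apply Polynomial.natDegree_sum_le_of_forall_le
      intro i hi
      calc (Polynomial.C (c i : ℚ) * Polynomial.X ^ i).natDegree
          ≤ (Polynomial.X ^ i : Polynomial ℚ).natDegree := Polynomial.natDegree_C_mul_le _ _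
        _ = i := Polynomial.natDegree_X_pow i
        _ ≤ d - 1 := Nat.le_sub_one_of_lt (mem_range.mp hi)
    have hd1 : 1 ≤ d := Nat.one_le_two_pow
    omega
  have hcoeff : p.coeff j = (c j : ℚ) := by
    rw [hp, Polynomial.finset_sum_coeff]
    rw [Finset.sum_eq_single j]
    · simp
    · intro i _ hij
      simp [Polynomial.coeff_X_pow, (Ne.symm hij)]
    · intro hj'
      exact absurd (mem_range.mpr hj) hj'
  rw [hp0] at hcoeff
  simpa using hcoeff.symm


lemma two_pow_split {m : ℕ} (hm : 1 ≤ m) : 2 ^ (m - 1) + 2 ^ (m - 1) = 2 ^ m := by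
  rw [← two_mul, ← pow_succ']; congr 1; omega


lemma zeta_two_pow_half {m : ℕ} (hm : 1 ≤ m) : zeta (2 ^ m) ^ (2 ^ (m - 1)) = -1 := by
  rw [zeta, ← Complex.exp_nat_mul]
  have e1 : ((2 ^ (m - 1) : ℕ) : ℂ) ≠ 0 := Nat.cast_ne_zero.mpr (by positivity)
  have e2 : ((2 ^ m : ℕ) : ℂ) = 2 * ((2 ^ (m - 1) : ℕ) : ℂ) := by
    push_cast
    rw [← pow_succ']
    congr 1
    omega
  rw [show ((2 ^ (m - 1) : ℕ) : ℂ) * (2 * Real.pi * Complex.I / ((2 ^ m : ℕ) : ℂ)) =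
      Real.pi * Complex.I from by rw [e2]; field_simp]
  exact Complex.exp_pi_mul_I


/-- Splitting a sum over `ZMod q`, `q = d + d`, weighted by `zeta`-powers. -/
lemma sum_zmod_split {q d : ℕ} [NeZero q] (hdd : d + d = q) (hz : zeta q ^ d = -1)
    (U : ZMod q → ℂ) :
    ∑ c : ZMod q, U c * zeta q ^ c.val
    = ∑ j ∈ range d, (U (j : ZMod q) - U ((j : ZMod q) + (d : ZMod q))) * zeta q ^ j := by
  have h1 : ∑ c : ZMod q, U c * zeta q ^ c.val
      = ∑ j ∈ range q, U (j : ZMod q) * zeta q ^ j := by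
    refine Finset.sum_nbij' (i := fun c => c.val) (j := fun j => (j : ZMod q)) ?_ ?_ ?_ ?_ ?_
    · intro c _; exact mem_range.mpr (ZMod.val_lt c)
    · intro j _; exact mem_univ _
    · intro c _; exact ZMod.natCast_rightInverse c
    · intro j hj; exact ZMod.val_cast_of_lt (mem_range.mp hj)
    · intro c _; rw [ZMod.natCast_rightInverse c]
  have h2 : ∑ j ∈ range q, U (j : ZMod q) * zeta q ^ j
      = ∑ j ∈ range (d + d), U (j : ZMod q) * zeta q ^ j := by rw [hdd]
  rw [h1, h2, Finset.sum_range_add, ← Finset.sum_add_distrib]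
  apply Finset.sum_congr rfl
  intro j hj
  rw [Nat.cast_add, pow_add, hz]
  push_cast
  ring


/-- Any unit of `ZMod (2^m)` fixes `2^(m-1)` under multiplication. -/
lemma unit_mul_half {m : ℕ} (hm : 1 ≤ m) (β : (ZMod (2 ^ m))ˣ) :
    (β : ZMod (2 ^ m)) * ((2 ^ (m - 1) : ℕ) : ZMod (2 ^ m))
      = ((2 ^ (m - 1) : ℕ) : ZMod (2 ^ m)) := by
  haveI : NeZero (2 ^ m) := ⟨pow_ne_zero _ two_ne_zero⟩
  have hdd : 2 ^ (m - 1) + 2 ^ (m - 1) = 2 ^ m := two_pow_split hm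
  set c : ZMod (2 ^ m) := (β : ZMod (2 ^ m)) * ((2 ^ (m - 1) : ℕ) : ZMod (2 ^ m)) with hc
  have h2c : ((2 * c.val : ℕ) : ZMod (2 ^ m)) = 0 := by
    push_cast
    rw [ZMod.natCast_val, ZMod.cast_id, hc]
    rw [show (2 : ZMod (2 ^ m)) * ((β : ZMod (2 ^ m)) * ((2 ^ (m - 1) : ℕ) : ZMod (2 ^ m)))
        = (β : ZMod (2 ^ m)) * (((2 ^ (m - 1) + 2 ^ (m - 1) : ℕ)) : ZMod (2 ^ m)) from by
      push_cast; ring]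
    rw [hdd, ZMod.natCast_self, mul_zero]
  have hcval : (2 : ℕ) ^ m ∣ 2 * c.val := (ZMod.natCast_eq_zero_iff _ _).mp h2c
  have hlt : c.val < 2 ^ m := ZMod.val_lt c
  have hcv : c.val = 0 ∨ c.val = 2 ^ (m - 1) := by
    obtain ⟨w, hw⟩ := hcval
    rcases Nat.lt_or_ge w 2 with hw2 | hw2
    · interval_cases w <;> omega
    · exfalso; nlinarith [Nat.one_le_two_pow (n := m)]
  rcases hcv with h0 | hdv
  · exfalso
    have hc0 : c = 0 := by
      have := ZMod.natCast_rightInverse c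
      rw [← this, h0, Nat.cast_zero]
    have hd0 : ((2 ^ (m - 1) : ℕ) : ZMod (2 ^ m)) = 0 := by
      have h := congrArg (fun z => ((β⁻¹ : (ZMod (2 ^ m))ˣ) : ZMod (2 ^ m)) * z) hc0
      simpa [hc, ← mul_assoc, Units.inv_mul] using h
    rw [ZMod.natCast_eq_zero_iff] at hd0
    have h1 : 2 ^ m ≤ 2 ^ (m - 1) := Nat.le_of_dvd (by positivity) hd0
    omega
  · have h := ZMod.natCast_rightInverse c
    rw [← h, hdv]


lemma gwht_def {n q : ℕ} (f : (Fin n → ZMod 2) → ZMod q) (u : Fin n → ZMod 2) :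
    gwht f u = ∑ x : Fin n → ZMod 2, zeta q ^ (f x).val * (-1 : ℂ) ^ (bdot u x).val := rfl

-- from s1/s2 (assumed proved)


lemma rpow_half_sq (n : ℕ) : ((2 : ℝ) ^ ((n : ℝ) / 2)) ^ 2 = (2 : ℝ) ^ n := by
  rw [← Real.rpow_natCast ((2 : ℝ) ^ ((n : ℝ) / 2)) 2, ← Real.rpow_mul (by norm_num)]
  rw [show (n : ℝ) / 2 * ((2 : ℕ) : ℝ) = ((n : ℕ) : ℝ) from by push_cast; ring]
  exact Real.rpow_natCast 2 n


/-- Core lemma: multiplying a gbent function `g : 𝔽₂ⁿ → ℤ_{2^m}` by a unit preserves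
gbentness. -/
lemma isGbent_unit_mul {n m : ℕ} (hm : 1 ≤ m) (g : (Fin n → ZMod 2) → ZMod (2 ^ m))
    (β : (ZMod (2 ^ m))ˣ) (hg : IsGbent g) :
    IsGbent (fun x => (β : ZMod (2 ^ m)) * g x) := by
  haveI : NeZero (2 ^ m) := ⟨pow_ne_zero _ two_ne_zero⟩
  intro u
  have hgu := hg u
  -- the coefficient function
  set T : ZMod (2 ^ m) → ℤ := fun c =>
    ∑ p ∈ (univ ×ˢ univ : Finset ((Fin n → ZMod 2) × (Fin n → ZMod 2))),
      if c = g p.1 - g p.2 then (-1 : ℤ) ^ ((bdot u p.1).val + (bdot u p.2).val) else 0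
    with hT
  -- Step A: for every unit γ, |gwht (γ•g) u|² = ∑_c T(γ⁻¹ c) ζ^{c.val}
  have stepA : ∀ γ : (ZMod (2 ^ m))ˣ,
      gwht (fun x => (γ : ZMod (2 ^ m)) * g x) u
        * (starRingEnd ℂ) (gwht (fun x => (γ : ZMod (2 ^ m)) * g x) u)
      = ∑ c : ZMod (2 ^ m), ((T ((γ⁻¹ : (ZMod (2 ^ m))ˣ) * c) : ℤ) : ℂ) * zeta (2 ^ m) ^ c.val := by
    intro γ
    have hA : gwht (fun x => (γ : ZMod (2 ^ m)) * g x) u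
        * (starRingEnd ℂ) (gwht (fun x => (γ : ZMod (2 ^ m)) * g x) u)
        = ∑ c : ZMod (2 ^ m), ((T c : ℤ) : ℂ) * zeta (2 ^ m) ^ ((γ : ZMod (2 ^ m)) * c).val := by
      rw [gwht_def, map_sum, Finset.sum_mul_sum, ← Finset.sum_product']
      have hterm : ∀ p : (Fin n → ZMod 2) × (Fin n → ZMod 2),
          (zeta (2 ^ m) ^ ((γ : ZMod (2 ^ m)) * g p.1).val * (-1 : ℂ) ^ (bdot u p.1).val)
            * (starRingEnd ℂ)
              (zeta (2 ^ m) ^ ((γ : ZMod (2 ^ m)) * g p.2).val * (-1 : ℂ) ^ (bdot u p.2).val)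
          = ∑ c : ZMod (2 ^ m),
              (if c = g p.1 - g p.2
                then ((-1 : ℂ) ^ ((bdot u p.1).val + (bdot u p.2).val)) else 0)
                * zeta (2 ^ m) ^ ((γ : ZMod (2 ^ m)) * c).val := by
        intro p
        simp only [ite_mul, zero_mul]
        rw [Finset.sum_ite_eq' univ (g p.1 - g p.2)
          (fun c => (-1 : ℂ) ^ ((bdot u p.1).val + (bdot u p.2).val)
            * zeta (2 ^ m) ^ ((γ : ZMod (2 ^ m)) * c).val)]
        simp only [mem_univ, if_true]
        rw [map_mul, conj_zeta_pow_val]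
        have hc1 : (starRingEnd ℂ) ((-1 : ℂ) ^ (bdot u p.2).val) = (-1 : ℂ) ^ (bdot u p.2).val := by
          rw [map_pow, map_neg, map_one]
        rw [hc1, mul_mul_mul_comm, ← zeta_pow_val_add]
        rw [show (γ : ZMod (2 ^ m)) * g p.1 + -((γ : ZMod (2 ^ m)) * g p.2)
            = (γ : ZMod (2 ^ m)) * (g p.1 - g p.2) from by ring]
        rw [pow_add]
        ring
      rw [Finset.sum_congr rfl (fun p _ => hterm p), Finset.sum_comm]
      apply Finset.sum_congr rfl
      intro c _
      rw [← Finset.sum_mul, hT]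
      push_cast [apply_ite]
      rfl
    rw [hA]
    -- reindex by multiplication by γ
    refine Fintype.sum_equiv
      ⟨fun c => (γ : ZMod (2 ^ m)) * c, fun c => ((γ⁻¹ : (ZMod (2 ^ m))ˣ) : ZMod (2 ^ m)) * c,
        fun c => by simp, fun c => by simp⟩ _ _ ?_
    intro c
    simp
  -- base case γ = 1
  have hbase : ∑ c : ZMod (2 ^ m), ((T c : ℤ) : ℂ) * zeta (2 ^ m) ^ c.val
      = (((2 : ℝ) ^ n : ℝ) : ℂ) := by
    have h1 := stepA 1
    simp only [Units.val_one, one_mul, inv_one] at h1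
    have hg1 : (fun x => g x) = g := rfl
    rw [hg1] at h1
    rw [← h1, Complex.mul_conj]
    norm_cast
    rw [← Complex.sq_norm, hgu, rpow_half_sq]
    norm_num
  -- linear independence facts
  have hdd : 2 ^ (m - 1) + 2 ^ (m - 1) = 2 ^ m := two_pow_split hm
  have hsplit := sum_zmod_split hdd (zeta_two_pow_half hm) (fun c => ((T c : ℤ) : ℂ))
  rw [hbase] at hsplit
  set cc : ℕ → ℤ := fun j =>
    (T (j : ZMod (2 ^ m)) - T ((j : ZMod (2 ^ m)) + ((2 ^ (m - 1) : ℕ) : ZMod (2 ^ m))))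
      - if j = 0 then 2 ^ n else 0 with hcc
  have hccsum : ∑ j ∈ range (2 ^ (m - 1)), ((cc j : ℤ) : ℂ) * zeta (2 ^ m) ^ j = 0 := by
    have hsub : ∀ j ∈ range (2 ^ (m - 1)), ((cc j : ℤ) : ℂ) * zeta (2 ^ m) ^ j
        = (((T (j : ZMod (2 ^ m)) : ℤ) : ℂ)
            - ((T ((j : ZMod (2 ^ m)) + ((2 ^ (m - 1) : ℕ) : ZMod (2 ^ m))) : ℤ) : ℂ))
              * zeta (2 ^ m) ^ j
          - (if j = 0 then ((2 : ℂ) ^ n) else 0) * zeta (2 ^ m) ^ j := by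
      intro j _
      rw [hcc]
      push_cast [apply_ite]
      split_ifs <;> ring
    rw [Finset.sum_congr rfl hsub, Finset.sum_sub_distrib, ← hsplit]
    have hone : ∑ j ∈ range (2 ^ (m - 1)),
        (if j = 0 then ((2 : ℂ) ^ n) else 0) * zeta (2 ^ m) ^ j = (2 : ℂ) ^ n := by
      simp only [ite_mul, zero_mul]
      rw [Finset.sum_ite_eq' (range (2 ^ (m - 1))) 0 (fun j => (2 : ℂ) ^ n * zeta (2 ^ m) ^ j)]
      simp [Finset.mem_range, Nat.two_pow_pos]
    rw [hone]
    push_cast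
    ring
  have hfacts := lin_indep hm cc hccsum
  have fact0 : T 0 - T ((2 ^ (m - 1) : ℕ) : ZMod (2 ^ m)) = 2 ^ n := by
    have h0 := hfacts 0 (Nat.two_pow_pos _)
    rw [hcc] at h0
    simp only [eq_self_iff_true, if_true, Nat.cast_zero, zero_add] at h0
    linarith
  have fact1 : ∀ j : ℕ, j ≠ 0 → j < 2 ^ (m - 1) →
      T ((j : ℕ) : ZMod (2 ^ m))
        = T (((j : ℕ) : ZMod (2 ^ m)) + ((2 ^ (m - 1) : ℕ) : ZMod (2 ^ m))) := by
    intro j hj0 hjd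
    have h0 := hfacts j hjd
    rw [hcc] at h0
    simp only [if_neg hj0] at h0
    linarith
  have fact2 : ∀ c' : ZMod (2 ^ m), c' ≠ 0 → c' ≠ ((2 ^ (m - 1) : ℕ) : ZMod (2 ^ m)) →
      T c' = T (c' + ((2 ^ (m - 1) : ℕ) : ZMod (2 ^ m))) := by
    intro c' h0 hd
    have hval := ZMod.val_lt c'
    rcases Nat.lt_or_ge c'.val (2 ^ (m - 1)) with hlt | hge
    · have hc' : ((c'.val : ℕ) : ZMod (2 ^ m)) = c' := ZMod.natCast_rightInverse c'
      have hv0 : c'.val ≠ 0 := by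
        intro h
        apply h0
        rw [← hc', h, Nat.cast_zero]
      have h1 := fact1 c'.val hv0 hlt
      rw [hc'] at h1
      exact h1
    · obtain ⟨jn, hjn⟩ : ∃ jn, c'.val = jn + 2 ^ (m - 1) := ⟨c'.val - 2 ^ (m - 1), by omega⟩
      have hjlt : jn < 2 ^ (m - 1) := by omega
      have hj0 : jn ≠ 0 := by
        intro h
        apply hd
        rw [← ZMod.natCast_rightInverse c', hjn, h, zero_add]
      have hc'eq : c' = ((jn : ℕ) : ZMod (2 ^ m)) + ((2 ^ (m - 1) : ℕ) : ZMod (2 ^ m)) := by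
        rw [← Nat.cast_add, ← hjn]
        exact (ZMod.natCast_rightInverse c').symm
      have hcplus : c' + ((2 ^ (m - 1) : ℕ) : ZMod (2 ^ m)) = ((jn : ℕ) : ZMod (2 ^ m)) := by
        rw [hc'eq, add_assoc, ← Nat.cast_add, hdd, ZMod.natCast_self, add_zero]
      have h1 := fact1 jn hj0 hjlt
      rw [hcplus]
      conv_lhs => rw [hc'eq]
      exact h1.symm
  -- conclude for β
  have hfinal := stepA β
  rw [sum_zmod_split hdd (zeta_two_pow_half hm)
    (fun c => ((T ((β⁻¹ : (ZMod (2 ^ m))ˣ) * c) : ℤ) : ℂ))] at hfinal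
  have hhalf : ((β⁻¹ : (ZMod (2 ^ m))ˣ) : ZMod (2 ^ m)) * ((2 ^ (m - 1) : ℕ) : ZMod (2 ^ m))
      = ((2 ^ (m - 1) : ℕ) : ZMod (2 ^ m)) := unit_mul_half hm β⁻¹
  have heval : ∑ j ∈ range (2 ^ (m - 1)),
      ((((T ((β⁻¹ : (ZMod (2 ^ m))ˣ) * ((j : ℕ) : ZMod (2 ^ m))) : ℤ) : ℂ))
        - (((T ((β⁻¹ : (ZMod (2 ^ m))ˣ) * (((j : ℕ) : ZMod (2 ^ m))
            + ((2 ^ (m - 1) : ℕ) : ZMod (2 ^ m)))) : ℤ) : ℂ)))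
          * zeta (2 ^ m) ^ j = (((2 : ℝ) ^ n : ℝ) : ℂ) := by
    rw [Finset.sum_eq_single_of_mem 0 (mem_range.mpr (Nat.two_pow_pos _))]
    · simp only [Nat.cast_zero, mul_zero, zero_add, pow_zero, mul_one, hhalf, mul_add]
      have hfc : ((T 0 - T ((2 ^ (m - 1) : ℕ) : ZMod (2 ^ m)) : ℤ) : ℂ) = (2 : ℂ) ^ n := by
        rw [fact0]
        push_cast
        ring
      push_cast at hfc ⊢
      exact hfc
    · intro j hjr hj0
      have hjd := mem_range.mp hjr
      have hdlt : 2 ^ (m - 1) < 2 ^ m := by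
        have := Nat.one_le_two_pow (n := m - 1)
        omega
      have hjcast : (((j : ℕ) : ZMod (2 ^ m))).val = j := ZMod.val_cast_of_lt (by omega)
      have hc0 : ((β⁻¹ : (ZMod (2 ^ m))ˣ) : ZMod (2 ^ m)) * ((j : ℕ) : ZMod (2 ^ m)) ≠ 0 := by
        intro h
        have hjz : ((j : ℕ) : ZMod (2 ^ m)) = 0 := by
          have h2 := congrArg (fun z => ((β : (ZMod (2 ^ m))ˣ) : ZMod (2 ^ m)) * z) h
          rwa [Units.mul_inv_cancel_left, mul_zero] at h2
        apply hj0
        rw [← hjcast, hjz, ZMod.val_zero]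
      have hcd : ((β⁻¹ : (ZMod (2 ^ m))ˣ) : ZMod (2 ^ m)) * ((j : ℕ) : ZMod (2 ^ m))
          ≠ ((2 ^ (m - 1) : ℕ) : ZMod (2 ^ m)) := by
        intro h
        have hjz : ((j : ℕ) : ZMod (2 ^ m)) = ((2 ^ (m - 1) : ℕ) : ZMod (2 ^ m)) := by
          have h2 := congrArg (fun z => ((β : (ZMod (2 ^ m))ˣ) : ZMod (2 ^ m)) * z) h
          rwa [Units.mul_inv_cancel_left, unit_mul_half hm β] at h2
        have : j = 2 ^ (m - 1) := by
          rw [← hjcast, hjz, ZMod.val_cast_of_lt hdlt]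
        omega
      have h2 := fact2 _ hc0 hcd
      rw [mul_add, hhalf, ← h2]
      ring
  rw [heval] at hfinal
  have hnormsq : Complex.normSq (gwht (fun x => (β : ZMod (2 ^ m)) * g x) u) = (2 : ℝ) ^ n := by
    rw [Complex.mul_conj] at hfinal
    exact_mod_cast hfinal
  rw [Complex.norm_def, hnormsq,
    show ((2 : ℝ) ^ n) = ((2 : ℝ) ^ ((n : ℝ) / 2)) ^ 2 from (rpow_half_sq n).symm,
    Real.sqrt_sq (by positivity)]


lemma zeta_pow_pow {t k : ℕ} (h : t ≤ k) : zeta (2 ^ k) ^ (2 ^ t) = zeta (2 ^ (k - t)) := by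
  rw [zeta, zeta, ← Complex.exp_nat_mul]
  congr 1
  have h1 : ((2 ^ k : ℕ) : ℂ) = ((2 ^ t : ℕ) : ℂ) * ((2 ^ (k - t) : ℕ) : ℂ) := by
    rw [← Nat.cast_mul, ← pow_add]
    congr 2
    omega
  have h2 : ((2 ^ (k - t) : ℕ) : ℂ) ≠ 0 := Nat.cast_ne_zero.mpr (by positivity)
  have h3 : ((2 ^ t : ℕ) : ℂ) ≠ 0 := Nat.cast_ne_zero.mpr (by positivity)
  rw [h1]
  field_simp


/-- Bridge: `ζ_{2^k}^{2^t·c} = ζ_{2^{k-t}}^{c mod 2^{k-t}}`. -/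
lemma zeta_bridge {k t : ℕ} (h : t ≤ k) (c : ZMod (2 ^ k)) :
    zeta (2 ^ k) ^ (((2 ^ t : ℕ) : ZMod (2 ^ k)) * c).val
      = zeta (2 ^ (k - t)) ^
          ((ZMod.castHom (pow_dvd_pow 2 (Nat.sub_le k t)) (ZMod (2 ^ (k - t))) c).val) := by
  haveI : NeZero (2 ^ k) := ⟨pow_ne_zero _ two_ne_zero⟩
  haveI : NeZero (2 ^ (k - t)) := ⟨pow_ne_zero _ two_ne_zero⟩
  have hc : ((2 ^ t : ℕ) : ZMod (2 ^ k)) * c = ((2 ^ t * c.val : ℕ) : ZMod (2 ^ k)) := by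
    push_cast
    rw [ZMod.natCast_val, ZMod.cast_id]
  rw [hc, zeta_pow_val_natCast, pow_mul, zeta_pow_pow h]
  rw [ZMod.castHom_apply, ← ZMod.natCast_val, zeta_pow_val_natCast]


/-- The truncation `ft` is the mod-`2^{k-t}` reduction of `f`. -/
lemma castHom_coord {n k t : ℕ} (a : ℕ → BF n)
    (f : (Fin n → ZMod 2) → ZMod (2 ^ k)) (ft : (Fin n → ZMod 2) → ZMod (2 ^ (k - t)))
    (hf : coordExpand k a f) (hft : coordExpand (k - t) a ft) (x : Fin n → ZMod 2) :
    ZMod.castHom (pow_dvd_pow 2 (Nat.sub_le k t)) (ZMod (2 ^ (k - t))) (f x) = ft x := by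
  rw [hf x, hft x, map_sum]
  have hterm : ∀ j, ZMod.castHom (pow_dvd_pow 2 (Nat.sub_le k t)) (ZMod (2 ^ (k - t)))
      ((2 : ZMod (2 ^ k)) ^ j * (((a j x).val : ℕ) : ZMod (2 ^ k)))
      = (2 : ZMod (2 ^ (k - t))) ^ j * (((a j x).val : ℕ) : ZMod (2 ^ (k - t))) := by
    intro j
    rw [map_mul, map_pow, map_natCast, map_ofNat]
  rw [Finset.sum_congr rfl (fun j _ => hterm j)]
  have hadd := Finset.sum_range_add
    (fun j => (2 : ZMod (2 ^ (k - t))) ^ j * (((a j x).val : ℕ) : ZMod (2 ^ (k - t))))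
    (k - t) (k - (k - t))
  rw [show k - t + (k - (k - t)) = k from by omega] at hadd
  rw [hadd]
  have hzero : ∀ i ∈ range (k - (k - t)),
      (2 : ZMod (2 ^ (k - t))) ^ (k - t + i) * (((a (k - t + i) x).val : ℕ) : ZMod (2 ^ (k - t)))
      = 0 := by
    intro i _
    have h20 : (2 : ZMod (2 ^ (k - t))) ^ (k - t + i) = 0 := by
      rw [pow_add]
      have : (2 : ZMod (2 ^ (k - t))) ^ (k - t) = 0 := by
        have := ZMod.natCast_self (2 ^ (k - t))
        push_cast at this
        exact this
      rw [this, zero_mul]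
    rw [h20, zero_mul]
  rw [Finset.sum_congr rfl hzero]
  simp

/-- Proposition 6: `f` is `ℤ_{2^k}`-bent iff each truncation
`f_t = a₀ + 2a₁ + ⋯ + 2^{k-t-1}a_{k-t-1} : 𝔽₂ⁿ → ℤ_{2^{k-t}}` is gbent. -/
theorem zqbent_iff_truncations_gbent (n k : ℕ) (hn : Even n) (hk : 1 ≤ k) (a : ℕ → BF n)
    (f : (Fin n → ZMod 2) → ZMod (2 ^ k)) (hf : coordExpand k a f) :
    IsZqBent f ↔
      ∀ t < k, ∀ ft : (Fin n → ZMod 2) → ZMod (2 ^ (k - t)),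
        coordExpand (k - t) a ft → IsGbent ft := by
  haveI : NeZero (2 ^ k) := ⟨pow_ne_zero _ two_ne_zero⟩
  constructor
  · intro hZ t ht ft hft u
    have ha : ((2 ^ t : ℕ) : ZMod (2 ^ k)) ≠ 0 := by
      intro h
      have hdvd := (ZMod.natCast_eq_zero_iff _ _).mp h
      have h1 := Nat.le_of_dvd (by positivity) hdvd
      have h2 : (2 : ℕ) ^ t < 2 ^ k := Nat.pow_lt_pow_right one_lt_two ht
      omega
    have h := hZ _ ha u
    suffices heq : gwht ft u = gwht (fun x => ((2 ^ t : ℕ) : ZMod (2 ^ k)) * f x) u by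
      rw [heq]; exact h
    rw [gwht_def, gwht_def]
    apply Finset.sum_congr rfl
    intro x _
    congr 1
    rw [zeta_bridge (le_of_lt ht) (f x), castHom_coord a f ft hf hft x]
  · intro hG a' ha' u
    have hv0 : a'.val ≠ 0 := by
      intro h
      apply ha'
      rw [← ZMod.natCast_rightInverse a', h, Nat.cast_zero]
    obtain ⟨t, b0, hb0, heq⟩ := Nat.exists_eq_pow_mul_and_not_dvd hv0 2 (by norm_num)
    have hb0pos : 0 < b0 := by
      rcases Nat.eq_zero_or_pos b0 with h | h
      · exact absurd (h ▸ Dvd.intro 0 rfl) hb0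
      · exact h
    have htk : t < k := by
      have h1 : 2 ^ t ≤ a'.val := by
        rw [heq]
        exact Nat.le_mul_of_pos_right _ hb0pos
      have h2 : a'.val < 2 ^ k := ZMod.val_lt a'
      by_contra hc
      push_neg at hc
      have := Nat.pow_le_pow_right (by norm_num : 1 ≤ 2) hc
      omega
    haveI : NeZero (2 ^ (k - t)) := ⟨pow_ne_zero _ two_ne_zero⟩
    set ft : (Fin n → ZMod 2) → ZMod (2 ^ (k - t)) := fun x =>
      ∑ j ∈ Finset.range (k - t), (2 : ZMod (2 ^ (k - t))) ^ j
        * (((a j x).val : ℕ) : ZMod (2 ^ (k - t))) with hftdef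
    have hft : coordExpand (k - t) a ft := fun x => rfl
    have hgb : IsGbent ft := hG t htk ft hft
    have hunit : IsUnit ((b0 : ℕ) : ZMod (2 ^ (k - t))) := by
      rw [ZMod.isUnit_iff_coprime]
      exact Nat.Coprime.pow_right _
        (Nat.coprime_comm.mp ((Nat.prime_two.coprime_iff_not_dvd).mpr hb0))
    obtain ⟨β, hβ⟩ := hunit
    have hkey := isGbent_unit_mul (m := k - t) (by omega) ft β hgb u
    suffices heq2 : gwht (fun x => a' * f x) u
        = gwht (fun x => (β : ZMod (2 ^ (k - t))) * ft x) u by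
      rw [heq2]; exact hkey
    rw [gwht_def, gwht_def]
    apply Finset.sum_congr rfl
    intro x _
    congr 1
    have ha'eq : a' = ((2 ^ t : ℕ) : ZMod (2 ^ k)) * ((b0 : ℕ) : ZMod (2 ^ k)) := by
      rw [← Nat.cast_mul, ← heq]
      exact (ZMod.natCast_rightInverse a').symm
    rw [ha'eq, mul_assoc, zeta_bridge (le_of_lt htk) (((b0 : ℕ) : ZMod (2 ^ k)) * f x)]
    have hch : ZMod.castHom (pow_dvd_pow 2 (Nat.sub_le k t)) (ZMod (2 ^ (k - t)))
        (((b0 : ℕ) : ZMod (2 ^ k)) * f x) = (β : ZMod (2 ^ (k - t))) * ft x := by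
      rw [map_mul, map_natCast, castHom_coord a f ft hf hft x, hβ]
    rw [hch]
end

section
/- Let k ≥ 2, f : 𝔽₂ⁿ → ℤ_{2^k} with coordinate functions a₀,…,a_{k−1} and component functions g₀,…,g_{2^{k−1}−1}, and let ζ = exp(2πi/2^k). Define complex numbers α_i = 2^{−(k−1)} ∑_{j=0}^{2^{k−1}−1} (−1)^{z_i·z_j} ζ^j for 0 ≤ i ≤ 2^{k−1}−1. Then (1) for every x ∈ 𝔽₂ⁿ, ζ^{f(x)} = ∑_{i=0}^{2^{k−1}−1} α_i (−1)^{g_i(x)}, and (2) for every u ∈ 𝔽₂ⁿ, H_f(u) = ∑_{i=0}^{2^{k−1}−1} α_i W_{g_i}(u). -/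
open Finset

/-- The coefficient `α_i = 2^{-(k-1)} ∑_j (-1)^{z_i·z_j} ζ^j`. -/
noncomputable def alphaCoef (k i : ℕ) : ℂ :=
  ((2 : ℂ) ^ (k - 1))⁻¹ *
    ∑ j ∈ Finset.range (2 ^ (k - 1)),
      (hadRow (k - 1) i j : ℂ) * Complex.exp (2 * Real.pi * Complex.I / ((2 ^ k : ℕ) : ℂ)) ^ j


lemma neg_one_pow_mod_two (x : ℕ) : ((-1 : ℂ)) ^ (x % 2) = (-1) ^ x := by
  conv_rhs => rw [← Nat.div_add_mod x 2, pow_add, pow_mul]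
  norm_num

lemma sign_add (a b : ZMod 2) :
    ((-1 : ℂ)) ^ ((a + b).val) = (-1) ^ a.val * (-1) ^ b.val := by
  rw [ZMod.val_add, neg_one_pow_mod_two, pow_add]

lemma zmod2_cases (z : ZMod 2) : z = 0 ∨ z = 1 := by revert z; decide

lemma ortho (m : ℕ) (c : ℕ → ZMod 2) :
    ∑ i ∈ Finset.range (2 ^ m), ((-1 : ℂ)) ^ ((∑ t ∈ Finset.range m, bit t i * c t).val)
      = if ∀ t < m, c t = 0 then (2 ^ m : ℂ) else 0 := by
  induction m with
  | zero => simp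
  | succ m ih =>
    have key : ∀ i < 2 ^ m,
        (∑ t ∈ Finset.range (m+1), bit t i * c t) = ∑ t ∈ Finset.range m, bit t i * c t := by
      intro i hi
      rw [Finset.sum_range_succ]
      have : bit m i = 0 := by simp [bit, Nat.testBit_lt_two_pow hi]
      simp [this]
    have key2 : ∀ i < 2 ^ m,
        (∑ t ∈ Finset.range (m+1), bit t (2^m + i) * c t)
          = (∑ t ∈ Finset.range m, bit t i * c t) + c m := by
      intro i hi
      rw [Finset.sum_range_succ]
      have h1 : bit m (2^m + i) = 1 := by
        simp [bit, Nat.testBit_two_pow_add_eq, Nat.testBit_lt_two_pow hi]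
      rw [h1, one_mul]
      congr 1
      apply Finset.sum_congr rfl
      intro t ht
      rw [Finset.mem_range] at ht
      congr 1
      simp [bit, Nat.testBit_two_pow_add_gt ht]
    rw [pow_succ, mul_two, Finset.sum_range_add]
    have e1 : ∑ i ∈ Finset.range (2^m), ((-1:ℂ)) ^ ((∑ t ∈ Finset.range (m+1), bit t i * c t).val)
        = ∑ i ∈ Finset.range (2^m), ((-1:ℂ)) ^ ((∑ t ∈ Finset.range m, bit t i * c t).val) := by
      apply Finset.sum_congr rfl
      intro i hi; rw [key i (Finset.mem_range.mp hi)]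
    have e2 : ∑ i ∈ Finset.range (2^m), ((-1:ℂ)) ^ ((∑ t ∈ Finset.range (m+1), bit t (2^m + i) * c t).val)
        = (-1:ℂ)^((c m).val) * ∑ i ∈ Finset.range (2^m), ((-1:ℂ)) ^ ((∑ t ∈ Finset.range m, bit t i * c t).val) := by
      rw [Finset.mul_sum]
      apply Finset.sum_congr rfl
      intro i hi
      rw [key2 i (Finset.mem_range.mp hi), sign_add]
      ring
    rw [e1, e2, ih]
    rcases zmod2_cases (c m) with h | h
    · have hc : (∀ t < m + 1, c t = 0) ↔ (∀ t < m, c t = 0) := by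
        constructor
        · intro h' t ht; exact h' t (by omega)
        · intro h' t ht
          rcases Nat.lt_succ_iff_lt_or_eq.mp ht with h'' | h''
          · exact h' t h''
          · subst h''; exact h
      by_cases hall : ∀ t < m, c t = 0
      · have h2 : ∀ t < m + 1, c t = 0 := hc.mpr hall
        simp only [if_pos hall, if_pos h2, h, ZMod.val_zero, pow_zero, one_mul, pow_succ]
        ring
      · have h2 : ¬ ∀ t < m + 1, c t = 0 := fun h' => hall (hc.mp h')
        simp only [if_neg hall, if_neg h2, h]
        simp
    · have hc : ¬ (∀ t < m + 1, c t = 0) := by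
        intro h'
        have := h' m (by omega)
        rw [h] at this
        exact one_ne_zero this
      by_cases hall : ∀ t < m, c t = 0
      · simp only [if_pos hall, if_neg hc, h, ZMod.val_one, pow_one]
        ring
      · simp only [if_neg hall, if_neg hc, h]
        simp

lemma sum_bits_lt (b : ℕ → ℕ) (hb : ∀ t, b t ≤ 1) (m : ℕ) :
    ∑ j ∈ Finset.range m, 2^j * b j < 2^m := by
  induction m with
  | zero => simp
  | succ m ih =>
    rw [Finset.sum_range_succ, pow_succ]
    have h1 : 2^m * b m ≤ 2^m * 1 := Nat.mul_le_mul_left _ (hb m)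
    omega

lemma testBit_sum_s15 (b : ℕ → ℕ) (hb : ∀ t, b t ≤ 1) (m t : ℕ) (ht : t < m) :
    Nat.testBit (∑ j ∈ Finset.range m, 2^j * b j) t = decide (b t = 1) := by
  induction m with
  | zero => omega
  | succ m ih =>
    rw [Finset.sum_range_succ]
    rcases Nat.lt_or_ge t m with h | h
    · rcases Nat.le_one_iff_eq_zero_or_eq_one.mp (hb m) with h0 | h1
      · simp [h0, ih h]
      · rw [h1, mul_one, Nat.add_comm, Nat.testBit_two_pow_add_gt h, ih h]
    · have htm : t = m := by omega
      subst htm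
      rcases Nat.le_one_iff_eq_zero_or_eq_one.mp (hb t) with h0 | h1
      · simp [h0, Nat.testBit_lt_two_pow (sum_bits_lt b hb t)]
      · rw [h1, mul_one, Nat.add_comm, Nat.testBit_two_pow_add_eq,
          Nat.testBit_lt_two_pow (sum_bits_lt b hb t)]
        simp [h1]

noncomputable abbrev zet (k : ℕ) : ℂ := Complex.exp (2 * Real.pi * Complex.I / ((2 ^ k : ℕ) : ℂ))

lemma zet_pow_two_pow (k : ℕ) : zet k ^ (2^k) = 1 := by
  rw [zet, ← Complex.exp_nat_mul]
  have h : ((2^k : ℕ) : ℂ) ≠ 0 := Nat.cast_ne_zero.mpr (by positivity)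
  rw [mul_div_assoc', mul_comm, mul_div_assoc, div_self h, mul_one, Complex.exp_two_pi_mul_I]

lemma zet_pow_half (k : ℕ) (hk : 1 ≤ k) : zet k ^ (2^(k-1)) = -1 := by
  rw [zet, ← Complex.exp_nat_mul, ← Complex.exp_pi_mul_I]
  congr 1
  have h2 : ((2^k : ℕ) : ℂ) = 2^(k-1) * 2 := by
    push_cast
    rw [← pow_succ]
    congr 1
    omega
  have hne : (2:ℂ)^(k-1) ≠ 0 := pow_ne_zero _ two_ne_zero
  rw [h2]
  push_cast
  field_simp

lemma zet_pow_val (k : ℕ) (N : ℕ) : zet k ^ (((N : ZMod (2^k))).val) = zet k ^ N := by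
  haveI : NeZero (2^k) := ⟨by positivity⟩
  rw [ZMod.val_natCast]
  conv_rhs => rw [← Nat.div_add_mod N (2^k), pow_add, pow_mul, zet_pow_two_pow, one_pow, one_mul]


lemma zmod2_add_eq_zero_iff : ∀ (u v : ZMod 2), u + v = 0 ↔ u = v := by decide

/-- Theorem 5: (1) `ζ^{f(x)} = ∑_i α_i (-1)^{g_i(x)}` and (2) `H_f(u) = ∑_i α_i W_{g_i}(u)`. -/
theorem zeta_pow_eq_sum_alpha_components (n k : ℕ) (hk : 2 ≤ k) (a : ℕ → BF n)
    (f : (Fin n → ZMod 2) → ZMod (2 ^ k)) (hf : coordExpand k a f) :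
    (∀ x, Complex.exp (2 * Real.pi * Complex.I / ((2 ^ k : ℕ) : ℂ)) ^ (f x).val =
        ∑ i ∈ Finset.range (2 ^ (k - 1)),
          alphaCoef k i * (-1 : ℂ) ^ (component k a i x).val) ∧
      (∀ u, gwht f u =
        ∑ i ∈ Finset.range (2 ^ (k - 1)),
          alphaCoef k i * (walsh (component k a i) u : ℂ)) := by
  have hb : ∀ x t, ((a t x).val) ≤ 1 := fun x t => Nat.lt_succ_iff.mp (ZMod.val_lt _)
  have part1 : ∀ x, zet k ^ (f x).val =
      ∑ i ∈ Finset.range (2^(k-1)), alphaCoef k i * (-1:ℂ)^((component k a i x).val) := by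
    intro x
    set M := ∑ j ∈ Finset.range (k-1), 2^j * (a j x).val with hMdef
    have hMlt : M < 2^(k-1) := sum_bits_lt _ (hb x) _
    have hfx : f x = ((M + 2^(k-1) * (a (k-1) x).val : ℕ) : ZMod (2^k)) := by
      rw [hf x]
      have hksucc : k = (k-1) + 1 := by omega
      conv_lhs => rw [show Finset.range k = Finset.range ((k-1)+1) by rw [← hksucc],
        Finset.sum_range_succ]
      rw [hMdef]
      push_cast
      ring
    have lhs_eq : zet k ^ (f x).val = (-1:ℂ)^((a (k-1) x).val) * zet k ^ M := by
      rw [hfx, zet_pow_val, pow_add, pow_mul, zet_pow_half k (by omega), mul_comm]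
    have hbitM : ∀ t, t < k-1 → bit t M = a t x := by
      intro t ht
      rw [bit, testBit_sum_s15 _ (hb x) _ _ ht]
      rcases zmod2_cases (a t x) with h | h <;> simp [h, ZMod.val_one]
    have inner : ∀ j, ∑ i ∈ Finset.range (2^(k-1)),
          ((hadRow (k-1) i j : ℂ)) * (-1:ℂ)^((component k a i x).val)
        = (-1:ℂ)^((a (k-1) x).val) *
            (if ∀ t < k-1, (bit t j + a t x) = 0 then ((2:ℂ)^(k-1)) else 0) := by
      intro j
      rw [← ortho (k-1) (fun t => bit t j + a t x), Finset.mul_sum]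
      apply Finset.sum_congr rfl
      intro i _
      have hsplit : (∑ t ∈ Finset.range (k-1), bit t i * (bit t j + a t x))
          = zdot (k-1) i j + ∑ t ∈ Finset.range (k-1), bit t i * a t x := by
        rw [zdot, ← Finset.sum_add_distrib]
        apply Finset.sum_congr rfl
        intro t _
        ring
      rw [hsplit, component, hadRow]
      push_cast
      rw [sign_add, sign_add]
      ring
    have hcond : ∀ j ∈ Finset.range (2^(k-1)),
        ((∀ t < k-1, (bit t j + a t x) = 0) ↔ j = M) := by
      intro j hj
      rw [Finset.mem_range] at hj
      constructor
      · intro h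
        apply Nat.eq_of_testBit_eq
        intro t
        rcases Nat.lt_or_ge t (k-1) with ht | ht
        · have h2 : bit t j = bit t M := by
            rw [hbitM t ht]
            exact (zmod2_add_eq_zero_iff _ _).mp (h t ht)
          by_cases hbj : Nat.testBit j t <;> by_cases hbM : Nat.testBit M t <;>
            simp [bit, hbj, hbM] at h2 ⊢
        · have hjt : Nat.testBit j t = false :=
            Nat.testBit_lt_two_pow (lt_of_lt_of_le hj (Nat.pow_le_pow_right (by norm_num) ht))
          have hMt : Nat.testBit M t = false :=
            Nat.testBit_lt_two_pow (lt_of_lt_of_le hMlt (Nat.pow_le_pow_right (by norm_num) ht))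
          rw [hjt, hMt]
      · intro h t ht
        subst h
        rw [hbitM t ht, zmod2_add_eq_zero_iff]
    rw [lhs_eq]
    symm
    have hne : (2:ℂ)^(k-1) ≠ 0 := pow_ne_zero _ two_ne_zero
    calc ∑ i ∈ Finset.range (2^(k-1)), alphaCoef k i * (-1:ℂ)^((component k a i x).val)
        = ((2:ℂ)^(k-1))⁻¹ * ∑ j ∈ Finset.range (2^(k-1)), zet k ^ j *
            ∑ i ∈ Finset.range (2^(k-1)),
              ((hadRow (k-1) i j : ℂ)) * (-1:ℂ)^((component k a i x).val) := by
          simp only [alphaCoef, Finset.sum_mul, Finset.mul_sum]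
          rw [show Complex.exp (2 * Real.pi * Complex.I / ((2 ^ k : ℕ) : ℂ)) = zet k from rfl]
          rw [Finset.sum_comm]
          apply Finset.sum_congr rfl; intro j _
          apply Finset.sum_congr rfl; intro i _
          ring
      _ = ((2:ℂ)^(k-1))⁻¹ * ∑ j ∈ Finset.range (2^(k-1)), zet k ^ j *
            ((-1:ℂ)^((a (k-1) x).val) * (if j = M then ((2:ℂ)^(k-1)) else 0)) := by
          congr 1
          apply Finset.sum_congr rfl; intro j hj
          rw [inner j, if_congr (hcond j hj) rfl rfl]
      _ = (-1:ℂ)^((a (k-1) x).val) * zet k ^ M := by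
          have hsum : ∑ j ∈ Finset.range (2^(k-1)), zet k ^ j *
              ((-1:ℂ)^((a (k-1) x).val) * (if j = M then ((2:ℂ)^(k-1)) else 0))
              = zet k ^ M * ((-1:ℂ)^((a (k-1) x).val) * ((2:ℂ)^(k-1))) := by
            rw [Finset.sum_eq_single M]
            · simp
            · intro j _ hne'; simp [hne']
            · intro hM; exact absurd (Finset.mem_range.mpr hMlt) hM
          rw [hsum]
          field_simp
  refine ⟨part1, ?_⟩
  intro u
  have walsh_cast : ∀ (g : BF n), ((walsh g u : ℤ) : ℂ) =
      ∑ x : Fin n → ZMod 2, (-1:ℂ)^((g x).val) * (-1:ℂ)^((bdot u x).val) := by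
    intro g
    rw [walsh]
    push_cast
    apply Finset.sum_congr rfl
    intro x _
    exact sign_add _ _
  rw [gwht]
  rw [show Complex.exp (2 * Real.pi * Complex.I / ((2 ^ k : ℕ) : ℂ)) = zet k from rfl]
  calc ∑ x : Fin n → ZMod 2, zet k ^ (f x).val * (-1:ℂ)^((bdot u x).val)
      = ∑ x : Fin n → ZMod 2, ∑ i ∈ Finset.range (2^(k-1)),
          alphaCoef k i * ((-1:ℂ)^((component k a i x).val) * (-1:ℂ)^((bdot u x).val)) := by
        apply Finset.sum_congr rfl; intro x _
        rw [part1 x, Finset.sum_mul]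
        apply Finset.sum_congr rfl; intro i _
        ring
    _ = ∑ i ∈ Finset.range (2^(k-1)), alphaCoef k i *
          ∑ x : Fin n → ZMod 2, (-1:ℂ)^((component k a i x).val) * (-1:ℂ)^((bdot u x).val) := by
        rw [Finset.sum_comm]
        apply Finset.sum_congr rfl; intro i _
        rw [Finset.mul_sum]
    _ = ∑ i ∈ Finset.range (2^(k-1)), alphaCoef k i * (walsh (component k a i) u : ℂ) := by
        apply Finset.sum_congr rfl; intro i _
        rw [walsh_cast]
end
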